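/- arXiv:2506.20789 — 6 statements merged into one kernel-verified Lean document; each statement's English description precedes it below -/
import Mathlib

section
/- Let p ∈ (1,2] and d ∈ (0,1) with (1−d)p > 1. Let (ε_i)_{i≥1} be i.i.d. real random variables with E[ε_1] = 0 and E|ε_1|^p < ∞, and let (a_i)_{i≥1} be real numbers with |a_i| ≤ C₀·i^{−(1−d)} for all i ≥ 1 and some C₀ > 0. Suppose that for each k ≥ 1 there is a random variable S_k such that almost surely ∑_{i=k+1}^m a_i ε_i → S_k as m → ∞. Then there exists C > 0 such that E|S_k|^p ≤ C·k^{1−(1−d)p} for all k ≥ 1. -/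
open MeasureTheory Filter ProbabilityTheory
open scoped ENNReal

open scoped NNReal

/-- subadditivity of rpow with exponent in [0,1], real version -/
lemma vbe_rpow_add_le {q a b : ℝ} (hq0 : 0 ≤ q) (hq1 : q ≤ 1) (ha : 0 ≤ a) (hb : 0 ≤ b) :
    (a + b) ^ q ≤ a ^ q + b ^ q := by
  have := NNReal.rpow_add_le_add_rpow (⟨a, ha⟩ : ℝ≥0) (⟨b, hb⟩ : ℝ≥0) hq0 hq1
  have h2 := NNReal.coe_le_coe.2 this
  exact h2

lemma vbe_rpow_sub_le {q u v : ℝ} (hq0 : 0 ≤ q) (hq1 : q ≤ 1) (h0 : 0 ≤ v) (h : v ≤ u) :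
    u ^ q - v ^ q ≤ (u - v) ^ q := by
  have h1 : u ^ q ≤ v ^ q + (u - v) ^ q := by
    have := vbe_rpow_add_le hq0 hq1 h0 (sub_nonneg.2 h)
    simpa using this
  linarith

noncomputable def vbeG (p : ℝ) : ℝ → ℝ := fun x => p * Real.sign x * |x| ^ (p - 1)

lemma vbeG_measurable (p : ℝ) : Measurable (vbeG p) := by
  have hsign : Measurable Real.sign := by
    unfold Real.sign
    exact Measurable.ite measurableSet_Iio measurable_const
      (Measurable.ite measurableSet_Ioi measurable_const measurable_const)
  exact ((measurable_const.mul hsign).mul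
    ((measurable_id.abs).pow_const (p - 1) |>.comp measurable_id)) |>.comp measurable_id

lemma vbe_hasDerivAt {p : ℝ} (hp : 1 < p) (x : ℝ) :
    HasDerivAt (fun t : ℝ => |t| ^ p) (vbeG p x) x := by
  rcases lt_trichotomy x 0 with hx | hx | hx
  · -- x < 0
    have h1 : HasDerivAt (fun t : ℝ => (-t) ^ p) (-(p * (-x) ^ (p - 1))) x := by
      have h0 : HasDerivAt (fun u : ℝ => u ^ p) (p * (-x) ^ (p - 1)) (-x) :=
        Real.hasDerivAt_rpow_const (Or.inl (by linarith))
      have hneg : HasDerivAt (fun t : ℝ => -t) (-1) x := (hasDerivAt_id x).neg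
      have := h0.comp x hneg
      rw [show p * (-x) ^ (p - 1) * -1 = -(p * (-x) ^ (p - 1)) by ring] at this
      exact this
    have heq : (fun t : ℝ => |t| ^ p) =ᶠ[nhds x] (fun t : ℝ => (-t) ^ p) := by
      filter_upwards [Iio_mem_nhds hx] with t ht
      rw [abs_of_neg ht]
    have := h1.congr_of_eventuallyEq heq
    have hs : Real.sign x = -1 := Real.sign_of_neg hx
    have ha : |x| = -x := abs_of_neg hx
    simpa [vbeG, hs, ha] using this
  · -- x = 0
    subst hx
    have hG : vbeG p 0 = 0 := by simp [vbeG]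
    rw [hG]
    rw [hasDerivAt_iff_tendsto_slope]
    have hb : ∀ t : ℝ, t ≠ 0 → ‖slope (fun t : ℝ => |t| ^ p) 0 t‖ ≤ |t| ^ (p - 1) := by
      intro t ht
      have hat : (0:ℝ) < |t| := abs_pos.2 ht
      have h1 : slope (fun t : ℝ => |t| ^ p) 0 t = |t| ^ p / t := by
        simp [slope, Real.zero_rpow (by linarith : p ≠ 0)]
        ring
      rw [h1]
      have h2 : ‖|t| ^ p / t‖ = |t| ^ p / |t| := by
        rw [norm_div, Real.norm_of_nonneg (Real.rpow_nonneg (abs_nonneg t) p),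
          Real.norm_eq_abs]
      have h3 : |t| ^ p / |t| = |t| ^ (p - 1) := by
        rw [Real.rpow_sub hat, Real.rpow_one]
      rw [h2, h3]
    refine squeeze_zero_norm' (a := fun t : ℝ => |t| ^ (p - 1)) ?_ ?_
    · filter_upwards [self_mem_nhdsWithin] with t ht
      exact hb t ht
    · have hc : ContinuousAt (fun y : ℝ => y ^ (p - 1)) 0 :=
        Real.continuousAt_rpow_const 0 (p - 1) (Or.inr (by linarith))
      have habs : Tendsto (fun t : ℝ => |t|) (nhds 0) (nhds 0) := by
        simpa using continuous_abs.tendsto (0:ℝ)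
      have h4 := hc.tendsto.comp habs
      have h0 : (0:ℝ) ^ (p - 1) = 0 := Real.zero_rpow (by linarith : p - 1 ≠ 0)
      rw [h0] at h4
      exact (h4.mono_left nhdsWithin_le_nhds)
  · -- 0 < x
    have h1 : HasDerivAt (fun t : ℝ => t ^ p) (p * x ^ (p - 1)) x :=
      Real.hasDerivAt_rpow_const (Or.inl (ne_of_gt hx))
    have heq : (fun t : ℝ => |t| ^ p) =ᶠ[nhds x] (fun t : ℝ => t ^ p) := by
      filter_upwards [Ioi_mem_nhds hx] with t ht
      rw [abs_of_pos ht]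
    have := h1.congr_of_eventuallyEq heq
    have hs : Real.sign x = 1 := Real.sign_of_pos hx
    have ha : |x| = x := abs_of_pos hx
    simpa [vbeG, hs, ha] using this

lemma vbeG_diff_le {p : ℝ} (hp : 1 < p) (hp2 : p ≤ 2) (u v : ℝ) :
    |vbeG p u - vbeG p v| ≤ 2 * p * |u - v| ^ (p - 1) := by
  have hq0 : (0:ℝ) ≤ p - 1 := by linarith
  have hq1 : p - 1 ≤ 1 := by linarith
  have hp0 : (0:ℝ) < p := by linarith
  -- helper for the same-sign (both nonneg) case
  have key : ∀ u v : ℝ, 0 ≤ v → v ≤ u →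
      |vbeG p u - vbeG p v| ≤ 2 * p * |u - v| ^ (p - 1) := by
    intro u v hv huv
    have hu : 0 ≤ u := le_trans hv huv
    have h1 : vbeG p u = p * u ^ (p - 1) := by
      rcases eq_or_lt_of_le hu with h | h
      · simp [vbeG, ← h, Real.zero_rpow (by linarith : p - 1 ≠ 0)]
      · simp [vbeG, Real.sign_of_pos h, abs_of_pos h]
    have h2 : vbeG p v = p * v ^ (p - 1) := by
      rcases eq_or_lt_of_le hv with h | h
      · simp [vbeG, ← h, Real.zero_rpow (by linarith : p - 1 ≠ 0)]
      · simp [vbeG, Real.sign_of_pos h, abs_of_pos h]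
    rw [h1, h2, ← mul_sub, abs_mul, abs_of_pos hp0]
    have h3 : |u ^ (p - 1) - v ^ (p - 1)| ≤ (u - v) ^ (p - 1) := by
      rw [abs_of_nonneg (sub_nonneg.2 (Real.rpow_le_rpow hv huv hq0))]
      exact vbe_rpow_sub_le hq0 hq1 hv huv
    calc p * |u ^ (p - 1) - v ^ (p - 1)| ≤ p * (u - v) ^ (p - 1) :=
          mul_le_mul_of_nonneg_left h3 (le_of_lt hp0)
      _ ≤ 2 * p * |u - v| ^ (p - 1) := by
          rw [abs_of_nonneg (sub_nonneg.2 huv)]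
          nlinarith [Real.rpow_nonneg (sub_nonneg.2 huv) (p - 1)]
  -- mixed sign case
  have mixed : ∀ u v : ℝ, v ≤ 0 → 0 ≤ u →
      |vbeG p u - vbeG p v| ≤ 2 * p * |u - v| ^ (p - 1) := by
    intro u v hv hu
    have h1 : vbeG p u = p * u ^ (p - 1) := by
      rcases eq_or_lt_of_le hu with h | h
      · simp [vbeG, ← h, Real.zero_rpow (by linarith : p - 1 ≠ 0)]
      · simp [vbeG, Real.sign_of_pos h, abs_of_pos h]
    have h2 : vbeG p v = -(p * (-v) ^ (p - 1)) := by
      rcases eq_or_lt_of_le hv with h | h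
      · simp [vbeG, h, Real.zero_rpow (by linarith : p - 1 ≠ 0)]
      · simp [vbeG, Real.sign_of_neg h, abs_of_neg h]
        try ring
    have huv : 0 ≤ u - v := by linarith
    have hub : u ≤ u - v := by linarith
    have hvb : -v ≤ u - v := by linarith
    have h3 : u ^ (p - 1) ≤ (u - v) ^ (p - 1) := Real.rpow_le_rpow hu hub hq0
    have h4 : (-v) ^ (p - 1) ≤ (u - v) ^ (p - 1) :=
      Real.rpow_le_rpow (by linarith) hvb hq0
    have h5 : vbeG p u - vbeG p v = p * u ^ (p - 1) + p * (-v) ^ (p - 1) := by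
      rw [h1, h2]; ring
    have t1 : 0 ≤ u ^ (p - 1) := Real.rpow_nonneg hu _
    have t2 : 0 ≤ (-v) ^ (p - 1) := Real.rpow_nonneg (by linarith) _
    rw [h5, abs_of_nonneg (by nlinarith), abs_of_nonneg huv]
    nlinarith
  -- combine: by symmetry reduce using oddness
  have hodd : ∀ x : ℝ, vbeG p (-x) = -vbeG p x := by
    intro x
    simp [vbeG, Real.sign_neg]
    try ring
  rcases le_total 0 v with hv | hv <;> rcases le_total 0 u with hu | hu
  · rcases le_total v u with h | h
    · exact key u v hv h
    · have h2 := key v u hu h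
      rwa [abs_sub_comm, abs_sub_comm v u] at h2
  · -- u ≤ 0 ≤ v
    have h2 := mixed v u hu hv
    rwa [abs_sub_comm, abs_sub_comm v u] at h2
  · exact mixed u v hv hu
  · -- both nonpos: use oddness
    have h : |vbeG p (-u) - vbeG p (-v)| ≤ 2 * p * |(-u) - (-v)| ^ (p - 1) := by
      rcases le_total (-v) (-u) with h' | h'
      · exact key (-u) (-v) (by linarith) h'
      · have h2 := key (-v) (-u) (by linarith) h'
        rwa [abs_sub_comm, abs_sub_comm (-v) (-u)] at h2
    rw [hodd, hodd] at h
    have e1 : -vbeG p u - -vbeG p v = -(vbeG p u - vbeG p v) := by ring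
    rw [e1, abs_neg] at h
    have e2 : |-u - -v| = |u - v| := by rw [show -u - -v = -(u - v) by ring, abs_neg]
    rwa [e2] at h

lemma vbe_pointwise {p : ℝ} (hp : 1 < p) (hp2 : p ≤ 2) (x y : ℝ) :
    |x + y| ^ p ≤ |x| ^ p + vbeG p x * y + 2 * p * |y| ^ p := by
  have hq0 : (0:ℝ) ≤ p - 1 := by linarith
  rcases eq_or_ne y 0 with hy | hy
  · simp [hy, Real.zero_rpow (by linarith : p ≠ 0)]
  · have hcont : Continuous (fun t : ℝ => |t| ^ p) :=
      (Real.continuous_rpow_const (by linarith)).comp continuous_abs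
    -- MVT on the interval between x and x + y
    have main : ∃ c : ℝ, |c - x| ≤ |y| ∧ |x + y| ^ p - |x| ^ p = vbeG p c * y := by
      rcases lt_or_gt_of_ne hy with hneg | hpos
      · -- y < 0 : interval [x+y, x]
        obtain ⟨c, hc, hceq⟩ := exists_hasDerivAt_eq_slope (fun t : ℝ => |t| ^ p) (vbeG p)
          (by linarith : x + y < x) (hcont.continuousOn)
          (fun t _ => vbe_hasDerivAt hp t)
        refine ⟨c, ?_, ?_⟩
        · rw [abs_of_neg hneg, abs_of_nonpos (by rcases hc with ⟨h1, h2⟩; linarith)]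
          rcases hc with ⟨h1, h2⟩; linarith
        · rw [hceq, show x - (x + y) = -y from by ring, div_mul_eq_mul_div,
            eq_div_iff (neg_ne_zero.2 hy)]
          ring
      · -- 0 < y : interval [x, x+y]
        obtain ⟨c, hc, hceq⟩ := exists_hasDerivAt_eq_slope (fun t : ℝ => |t| ^ p) (vbeG p)
          (by linarith : x < x + y) (hcont.continuousOn)
          (fun t _ => vbe_hasDerivAt hp t)
        refine ⟨c, ?_, ?_⟩
        · rw [abs_of_pos hpos, abs_of_nonneg (by rcases hc with ⟨h1, h2⟩; linarith)]
          rcases hc with ⟨h1, h2⟩; linarith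
        · rw [hceq, show x + y - x = y from by ring, div_mul_eq_mul_div,
            eq_div_iff hy]
          try ring
    obtain ⟨c, hc1, hc2⟩ := main
    have h1 : |x + y| ^ p - |x| ^ p - vbeG p x * y = (vbeG p c - vbeG p x) * y := by
      rw [hc2]; ring
    have h2 : (vbeG p c - vbeG p x) * y ≤ 2 * p * |c - x| ^ (p - 1) * |y| := by
      calc (vbeG p c - vbeG p x) * y ≤ |(vbeG p c - vbeG p x) * y| := le_abs_self _
        _ = |vbeG p c - vbeG p x| * |y| := abs_mul _ _
        _ ≤ 2 * p * |c - x| ^ (p - 1) * |y| :=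
            mul_le_mul_of_nonneg_right (vbeG_diff_le hp hp2 c x) (abs_nonneg y)
    have h3 : 2 * p * |c - x| ^ (p - 1) * |y| ≤ 2 * p * |y| ^ p := by
      have hmono : |c - x| ^ (p - 1) ≤ |y| ^ (p - 1) :=
        Real.rpow_le_rpow (abs_nonneg _) hc1 hq0
      have : |y| ^ (p - 1) * |y| = |y| ^ p := by
        nth_rewrite 2 [← Real.rpow_one |y|]
        rw [← Real.rpow_add (abs_pos.2 hy)]
        norm_num
      calc 2 * p * |c - x| ^ (p - 1) * |y| ≤ 2 * p * |y| ^ (p - 1) * |y| := by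
            have := mul_le_mul_of_nonneg_right hmono (abs_nonneg y)
            nlinarith [abs_nonneg y, Real.rpow_nonneg (abs_nonneg (c - x)) (p-1)]
        _ = 2 * p * |y| ^ p := by rw [mul_assoc, this]
    linarith

lemma vbe_add_dom {p : ℝ} (hp : 1 < p) (x y : ℝ) :
    |x + y| ^ p ≤ 2 ^ p * (|x| ^ p + |y| ^ p) := by
  have hp0 : (0:ℝ) ≤ p := by linarith
  have h1 : |x + y| ≤ 2 * max |x| |y| := by
    rcases le_total |x| |y| with h | h
    · calc |x + y| ≤ |x| + |y| := abs_add_le x y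
        _ ≤ 2 * max |x| |y| := by rw [max_eq_right h]; linarith
    · calc |x + y| ≤ |x| + |y| := abs_add_le x y
        _ ≤ 2 * max |x| |y| := by rw [max_eq_left h]; linarith
  have h2 : |x + y| ^ p ≤ (2 * max |x| |y|) ^ p :=
    Real.rpow_le_rpow (abs_nonneg _) h1 hp0
  have h3 : (2 * max |x| |y|) ^ p = 2 ^ p * (max |x| |y|) ^ p :=
    Real.mul_rpow (by norm_num) (le_max_of_le_left (abs_nonneg x))
  have h4 : (max |x| |y|) ^ p ≤ |x| ^ p + |y| ^ p := by
    rcases le_total |x| |y| with h | h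
    · rw [max_eq_right h]
      nlinarith [Real.rpow_nonneg (abs_nonneg x) p]
    · rw [max_eq_left h]
      nlinarith [Real.rpow_nonneg (abs_nonneg y) p]
  calc |x + y| ^ p ≤ 2 ^ p * (max |x| |y|) ^ p := by rw [← h3]; exact h2
    _ ≤ 2 ^ p * (|x| ^ p + |y| ^ p) := by
        have h2p : (0:ℝ) ≤ 2 ^ p := Real.rpow_nonneg (by norm_num) p
        nlinarith

lemma vbeG_mul_dom {p : ℝ} (hp : 1 < p) (hp2 : p ≤ 2) (x y : ℝ) :
    |vbeG p x * y| ≤ p * (|x| ^ p + |y| ^ p) := by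
  have hq0 : (0:ℝ) ≤ p - 1 := by linarith
  have hp0 : (0:ℝ) < p := by linarith
  have h1 : |vbeG p x| ≤ p * |x| ^ (p - 1) := by
    rw [vbeG, abs_mul, abs_mul, abs_of_pos hp0,
      abs_of_nonneg (Real.rpow_nonneg (abs_nonneg x) (p - 1))]
    have : |Real.sign x| ≤ 1 := by
      rcases lt_trichotomy x 0 with h | h | h
      · simp [Real.sign_of_neg h]
      · simp [h]
      · simp [Real.sign_of_pos h]
    have ht : (0:ℝ) ≤ |x| ^ (p - 1) := Real.rpow_nonneg (abs_nonneg x) (p - 1)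
    have h5 : |Real.sign x| * |x| ^ (p - 1) ≤ |x| ^ (p - 1) :=
      mul_le_of_le_one_left ht this
    rw [mul_assoc]
    exact mul_le_mul_of_nonneg_left h5 (le_of_lt hp0)
  have h2 : |x| ^ (p - 1) * |y| ≤ |x| ^ p + |y| ^ p := by
    set m := max |x| |y| with hm
    have hm0 : 0 ≤ m := le_max_of_le_left (abs_nonneg x)
    have hx : |x| ^ (p - 1) ≤ m ^ (p - 1) :=
      Real.rpow_le_rpow (abs_nonneg x) (le_max_left _ _) hq0
    have hy : |y| ≤ m := le_max_right _ _
    have hmp : m ^ (p - 1) * m = m ^ p := by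
      rcases eq_or_lt_of_le hm0 with h | h
      · rw [← h]
        simp [Real.zero_rpow (by linarith : p - 1 ≠ 0),
          Real.zero_rpow (by linarith : p ≠ 0)]
      · nth_rewrite 2 [← Real.rpow_one m]
        rw [← Real.rpow_add h]
        norm_num
    have hmxy : m ^ p ≤ |x| ^ p + |y| ^ p := by
      rcases le_total |x| |y| with h | h
      · rw [hm, max_eq_right h]
        nlinarith [Real.rpow_nonneg (abs_nonneg x) p]
      · rw [hm, max_eq_left h]
        nlinarith [Real.rpow_nonneg (abs_nonneg y) p]
    calc |x| ^ (p - 1) * |y| ≤ m ^ (p - 1) * m := by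
          nlinarith [Real.rpow_nonneg (abs_nonneg x) (p - 1), abs_nonneg y,
            Real.rpow_nonneg hm0 (p - 1)]
      _ = m ^ p := hmp
      _ ≤ |x| ^ p + |y| ^ p := hmxy
  calc |vbeG p x * y| = |vbeG p x| * |y| := abs_mul _ _
    _ ≤ p * |x| ^ (p - 1) * |y| := mul_le_mul_of_nonneg_right h1 (abs_nonneg y)
    _ = p * (|x| ^ (p - 1) * |y|) := by ring
    _ ≤ p * (|x| ^ p + |y| ^ p) := mul_le_mul_of_nonneg_left h2 (le_of_lt hp0)

section Prob

variable {Ω : Type*} [MeasurableSpace Ω] {P : Measure Ω} [IsProbabilityMeasure P]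

lemma vbe_integrable_rpow_add {p : ℝ} (hp : 1 < p) (X Y : Ω → ℝ)
    (hX : Measurable X) (hY : Measurable Y)
    (hXp : Integrable (fun ω => |X ω| ^ p) P) (hYp : Integrable (fun ω => |Y ω| ^ p) P) :
    Integrable (fun ω => |X ω + Y ω| ^ p) P := by
  refine Integrable.mono' ((hXp.add hYp).const_mul (2 ^ p)) ?_ ?_
  · exact (((hX.add hY).abs.pow_const p)).aestronglyMeasurable
  · filter_upwards with ω
    rw [Real.norm_of_nonneg (Real.rpow_nonneg (abs_nonneg _) p)]
    exact vbe_add_dom hp (X ω) (Y ω)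

lemma vbe_two {p : ℝ} (hp : 1 < p) (hp2 : p ≤ 2) (X Y : Ω → ℝ)
    (hX : Measurable X) (hY : Measurable Y) (hXY : IndepFun X Y P)
    (hXp : Integrable (fun ω => |X ω| ^ p) P) (hYp : Integrable (fun ω => |Y ω| ^ p) P)
    (hY0 : ∫ ω, Y ω ∂P = 0) :
    ∫ ω, |X ω + Y ω| ^ p ∂P ≤ ∫ ω, |X ω| ^ p ∂P + 2 * p * ∫ ω, |Y ω| ^ p ∂P := by
  have hgX : Measurable (fun ω => vbeG p (X ω)) := (vbeG_measurable p).comp hX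
  have hgXY_int : Integrable (fun ω => vbeG p (X ω) * Y ω) P := by
    refine Integrable.mono' ((hXp.add hYp).const_mul p) ?_ ?_
    · exact (hgX.mul hY).aestronglyMeasurable
    · filter_upwards with ω
      rw [Real.norm_eq_abs]
      exact vbeG_mul_dom hp hp2 (X ω) (Y ω)
  have hindg : IndepFun (fun ω => vbeG p (X ω)) Y P :=
    hXY.comp (vbeG_measurable p) measurable_id
  have hzero : ∫ ω, vbeG p (X ω) * Y ω ∂P = 0 := by
    have := hindg.integral_fun_mul_eq_mul_integral hgX.aestronglyMeasurable hY.aestronglyMeasurable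
    rw [this, hY0, mul_zero]
  have hsum_int : Integrable
      (fun ω => |X ω| ^ p + vbeG p (X ω) * Y ω + 2 * p * |Y ω| ^ p) P :=
    (hXp.add hgXY_int).add (hYp.const_mul (2 * p))
  have hLHS_int : Integrable (fun ω => |X ω + Y ω| ^ p) P :=
    vbe_integrable_rpow_add hp X Y hX hY hXp hYp
  calc ∫ ω, |X ω + Y ω| ^ p ∂P
      ≤ ∫ ω, (|X ω| ^ p + vbeG p (X ω) * Y ω + 2 * p * |Y ω| ^ p) ∂P :=
        integral_mono hLHS_int hsum_int (fun ω => vbe_pointwise hp hp2 (X ω) (Y ω))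
    _ = ∫ ω, |X ω| ^ p ∂P + ∫ ω, vbeG p (X ω) * Y ω ∂P
          + 2 * p * ∫ ω, |Y ω| ^ p ∂P := by
        rw [integral_add (f := fun ω => |X ω| ^ p + vbeG p (X ω) * Y ω)
            (g := fun ω => 2 * p * |Y ω| ^ p) (hXp.add hgXY_int) (hYp.const_mul (2 * p)),
          integral_add (f := fun ω => |X ω| ^ p) (g := fun ω => vbeG p (X ω) * Y ω)
            hXp hgXY_int, MeasureTheory.integral_const_mul]
    _ = ∫ ω, |X ω| ^ p ∂P + 2 * p * ∫ ω, |Y ω| ^ p ∂P := by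
        rw [hzero]; ring

lemma vbe_sum {p : ℝ} (hp : 1 < p) (hp2 : p ≤ 2) (X : ℕ → Ω → ℝ)
    (hXm : ∀ i, Measurable (X i))
    (hind : iIndepFun X P)
    (hXp : ∀ i, Integrable (fun ω => |X i ω| ^ p) P)
    (hX0 : ∀ i, ∫ ω, X i ω ∂P = 0)
    (s : Finset ℕ) :
    Integrable (fun ω => |∑ i ∈ s, X i ω| ^ p) P ∧
      ∫ ω, |∑ i ∈ s, X i ω| ^ p ∂P ≤ 2 * p * ∑ i ∈ s, ∫ ω, |X i ω| ^ p ∂P := by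
  classical
  induction s using Finset.induction_on with
  | empty =>
    constructor
    · simpa [Real.zero_rpow (by linarith : p ≠ 0)] using (integrable_const (0:ℝ))
    · simp [Real.zero_rpow (by linarith : p ≠ 0)]
  | @insert i s hi ih =>
    have hTm : Measurable (fun ω => ∑ j ∈ s, X j ω) := by
      apply Finset.measurable_sum
      exact fun j _ => hXm j
    have hindi : IndepFun (fun ω => ∑ j ∈ s, X j ω) (X i) P := by
      have := hind.indepFun_finsetSum_of_notMem hXm hi
      have he : (∑ j ∈ s, X j) = (fun ω => ∑ j ∈ s, X j ω) := by
        funext ω; simp [Finset.sum_apply]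
      rwa [he] at this
    have heq : ∀ ω, ∑ j ∈ insert i s, X j ω = (∑ j ∈ s, X j ω) + X i ω := by
      intro ω
      rw [Finset.sum_insert hi]
      ring
    have hint : Integrable (fun ω => |∑ j ∈ insert i s, X j ω| ^ p) P := by
      have := vbe_integrable_rpow_add hp _ _ hTm (hXm i) ih.1 (hXp i)
      apply this.congr
      filter_upwards with ω
      rw [heq ω]
    refine ⟨hint, ?_⟩
    have hmain := vbe_two hp hp2 _ _ hTm (hXm i) hindi ih.1 (hXp i) (hX0 i)
    have he2 : ∫ ω, |∑ j ∈ insert i s, X j ω| ^ p ∂P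
        = ∫ ω, |(∑ j ∈ s, X j ω) + X i ω| ^ p ∂P := by
      apply integral_congr_ae
      filter_upwards with ω
      rw [heq ω]
    rw [he2, Finset.sum_insert hi]
    calc ∫ ω, |(∑ j ∈ s, X j ω) + X i ω| ^ p ∂P
        ≤ ∫ ω, |∑ j ∈ s, X j ω| ^ p ∂P + 2 * p * ∫ ω, |X i ω| ^ p ∂P := hmain
      _ ≤ 2 * p * ∑ j ∈ s, ∫ ω, |X j ω| ^ p ∂P + 2 * p * ∫ ω, |X i ω| ^ p ∂P := by
          linarith [ih.2]
      _ = 2 * p * (∫ ω, |X i ω| ^ p ∂P + ∑ j ∈ s, ∫ ω, |X j ω| ^ p ∂P) := by ring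

end Prob

lemma vbe_tail_sum {q : ℝ} (hq : 1 < q) {k m : ℕ} (hk : 1 ≤ k) :
    ∑ i ∈ Finset.Icc (k + 1) m, ((i : ℝ)) ^ (-q) ≤ (k : ℝ) ^ (1 - q) / (q - 1) := by
  have hk0 : (0:ℝ) < (k:ℝ) := by exact_mod_cast Nat.lt_of_lt_of_le Nat.zero_lt_one hk
  have hkq : (0:ℝ) ≤ (k:ℝ) ^ (1 - q) := Real.rpow_nonneg (le_of_lt hk0) _
  rcases le_or_gt m k with hmk | hkm
  · rw [Finset.Icc_eq_empty (by omega)]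
    simp
    exact div_nonneg hkq (by linarith)
  · set n : ℕ := m - k with hn
    have hmn : m = k + n := by omega
    have hA : AntitoneOn (fun x : ℝ => x ^ (-q)) (Set.Icc (k:ℝ) ((k:ℝ) + n)) := by
      intro x hx y hy hxy
      exact Real.rpow_le_rpow_of_nonpos (lt_of_lt_of_le hk0 hx.1) hxy (by linarith)
    have hint := hA.sum_le_integral
    -- identify the sum
    have hsum : ∑ i ∈ Finset.Icc (k + 1) m, ((i : ℝ)) ^ (-q)
        = ∑ i ∈ Finset.range n, ((k:ℝ) + ((i + 1 : ℕ) : ℝ)) ^ (-q) := by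
      rw [← Finset.Ico_add_one_right_eq_Icc, Finset.sum_Ico_eq_sum_range]
      have hcount : m + 1 - (k + 1) = n := by omega
      rw [hcount]
      apply Finset.sum_congr rfl
      intro i _
      congr 1
      push_cast
      ring
    -- compute the integral
    have hq1 : -q + 1 = 1 - q := by ring
    have hnot : (0:ℝ) ∉ Set.uIcc (k:ℝ) ((k:ℝ) + n) := by
      rw [Set.uIcc_of_le (by linarith [Nat.cast_nonneg (α := ℝ) n] : (k:ℝ) ≤ (k:ℝ) + n)]
      intro h
      rcases h with ⟨h1, _⟩
      linarith
    have hival : ∫ x in (k:ℝ)..((k:ℝ) + n), x ^ (-q)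
        = (((k:ℝ) + n) ^ (1 - q) - (k:ℝ) ^ (1 - q)) / (1 - q) := by
      rw [integral_rpow (Or.inr ⟨by intro h; rw [neg_eq_iff_eq_neg] at h; linarith, hnot⟩)]
      rw [hq1]
    have hb0 : (0:ℝ) ≤ ((k:ℝ) + n) ^ (1 - q) := Real.rpow_nonneg (by positivity) _
    have hfin : (((k:ℝ) + n) ^ (1 - q) - (k:ℝ) ^ (1 - q)) / (1 - q)
        ≤ (k:ℝ) ^ (1 - q) / (q - 1) := by
      have he : (((k:ℝ) + n) ^ (1 - q) - (k:ℝ) ^ (1 - q)) / (1 - q)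
          = ((k:ℝ) ^ (1 - q) - ((k:ℝ) + n) ^ (1 - q)) / (q - 1) := by
        rw [show (1:ℝ) - q = -(q - 1) by ring, div_neg]
        ring
      rw [he]
      apply div_le_div_of_nonneg_right ?_ (by linarith)
      · linarith
    calc ∑ i ∈ Finset.Icc (k + 1) m, ((i : ℝ)) ^ (-q)
        = ∑ i ∈ Finset.range n, ((k:ℝ) + ((i + 1 : ℕ) : ℝ)) ^ (-q) := hsum
      _ ≤ ∫ x in (k:ℝ)..((k:ℝ) + n), x ^ (-q) := hint
      _ ≤ (k : ℝ) ^ (1 - q) / (q - 1) := by rw [hival]; exact hfin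

/-- Tail-series moment bound for long-memory linear processes (equation (2.2:2) of the
paper): under i.i.d. centered innovations with `E|ε|^p < ∞` and coefficients
`|a_i| ≤ C₀ i^{-(1-d)}` with `(1-d)p > 1`, the tails `S_k = ∑_{i>k} a_i ε_i` satisfy
`E|S_k|^p ≤ C k^{1-(1-d)p}`. -/
theorem tail_series_moment_bound
    {Ω : Type*} [MeasurableSpace Ω] (P : Measure Ω) [IsProbabilityMeasure P]
    (p d : ℝ) (hp1 : 1 < p) (hp2 : p ≤ 2) (hd0 : 0 < d) (hd1 : d < 1)
    (hdp : 1 < (1 - d) * p)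
    (ε : ℕ → Ω → ℝ) (hmeas : ∀ i, Measurable (ε i))
    (hindep : iIndepFun ε P)
    (hident : ∀ i, Measure.map (ε i) P = Measure.map (ε 1) P)
    (hcent : ∫ ω, ε 1 ω ∂P = 0)
    (hLp : ∫⁻ ω, (‖ε 1 ω‖₊ : ℝ≥0∞) ^ p ∂P < ⊤)
    (C₀ : ℝ) (hC₀ : 0 < C₀)
    (a : ℕ → ℝ) (ha : ∀ i : ℕ, 1 ≤ i → |a i| ≤ C₀ * (i : ℝ) ^ (-(1 - d)))
    (S : ℕ → Ω → ℝ) (hSmeas : ∀ k, Measurable (S k))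
    (hS : ∀ k : ℕ, ∀ᵐ ω ∂P,
      Tendsto (fun m => ∑ i ∈ Finset.Icc (k + 1) m, a i * ε i ω) atTop (nhds (S k ω))) :
    ∃ C > 0, ∀ k : ℕ, 1 ≤ k →
      ∫⁻ ω, (‖S k ω‖₊ : ℝ≥0∞) ^ p ∂P ≤
        ENNReal.ofReal (C * (k : ℝ) ^ (1 - (1 - d) * p)) := by
  set q : ℝ := (1 - d) * p with hqdef
  have hp0 : (0:ℝ) < p := by linarith
  -- pointwise identification of the ENNReal p-th power
  have hpt : ∀ x : ℝ, ENNReal.ofReal (|x| ^ p) = (‖x‖₊ : ℝ≥0∞) ^ p := by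
    intro x
    rw [← ENNReal.ofReal_rpow_of_nonneg (abs_nonneg x) hp0.le, ← Real.enorm_eq_ofReal_abs, enorm_eq_nnnorm]
  have hpt' : ∀ x : ℝ, (‖|x| ^ p‖₊ : ℝ≥0∞) = (‖x‖₊ : ℝ≥0∞) ^ p := by
    intro x
    rw [← enorm_eq_nnnorm, ← ofReal_norm, Real.norm_of_nonneg (Real.rpow_nonneg (abs_nonneg x) p)]
    exact hpt x
  have hg : Measurable (fun x : ℝ => |x| ^ p) := measurable_id.abs.pow_const p
  -- p-th moments are identical
  have hlp_i : ∀ i, ∫⁻ ω, (‖ε i ω‖₊ : ℝ≥0∞) ^ p ∂P = ∫⁻ ω, (‖ε 1 ω‖₊ : ℝ≥0∞) ^ p ∂P := by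
    intro i
    have hgm : Measurable (fun x : ℝ => ((‖x‖₊ : ℝ≥0∞)) ^ p) :=
      measurable_id.nnnorm.coe_nnreal_ennreal.pow_const p
    rw [← lintegral_map hgm (hmeas i), hident i, lintegral_map hgm (hmeas 1)]
  have Ihpε : ∀ i, Integrable (fun ω => |ε i ω| ^ p) P := by
    intro i
    constructor
    · exact (((hmeas i).abs).pow_const p).aestronglyMeasurable
    · have heq : ∫⁻ ω, (‖|ε i ω| ^ p‖₊ : ℝ≥0∞) ∂P = ∫⁻ ω, (‖ε i ω‖₊ : ℝ≥0∞) ^ p ∂P :=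
        lintegral_congr fun ω => hpt' (ε i ω)
      unfold HasFiniteIntegral
      show ∫⁻ ω, (‖|ε i ω| ^ p‖₊ : ℝ≥0∞) ∂P < ⊤
      rw [heq, hlp_i i]
      exact hLp
  set Ep : ℝ := ∫ ω, |ε 1 ω| ^ p ∂P with hEpdef
  have hEp0 : 0 ≤ Ep := integral_nonneg fun ω => Real.rpow_nonneg (abs_nonneg _) p
  have hEp_i : ∀ i, ∫ ω, |ε i ω| ^ p ∂P = Ep := by
    intro i
    rw [hEpdef, ← integral_map (hmeas i).aemeasurable hg.aestronglyMeasurable, hident i,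
      integral_map (hmeas 1).aemeasurable hg.aestronglyMeasurable]
  -- first moments
  have hε_int : ∀ i, Integrable (ε i) P := by
    intro i
    constructor
    · exact (hmeas i).aestronglyMeasurable
    · unfold HasFiniteIntegral
      calc ∫⁻ ω, (‖ε i ω‖₊ : ℝ≥0∞) ∂P
          ≤ ∫⁻ ω, (1 + (‖ε i ω‖₊ : ℝ≥0∞) ^ p) ∂P := by
            apply lintegral_mono
            intro ω
            show (‖ε i ω‖₊ : ℝ≥0∞) ≤ 1 + (‖ε i ω‖₊ : ℝ≥0∞) ^ p
            rcases le_total ((‖ε i ω‖₊ : ℝ≥0∞)) 1 with h | h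
            · exact h.trans le_self_add
            · calc (‖ε i ω‖₊ : ℝ≥0∞) = (‖ε i ω‖₊ : ℝ≥0∞) ^ (1:ℝ) := (ENNReal.rpow_one _).symm
                _ ≤ (‖ε i ω‖₊ : ℝ≥0∞) ^ p := ENNReal.rpow_le_rpow_of_exponent_le h (by linarith)
                _ ≤ 1 + (‖ε i ω‖₊ : ℝ≥0∞) ^ p := le_add_self
        _ < ⊤ := by
            rw [lintegral_add_left measurable_const]
            rw [lintegral_const, hlp_i i]
            exact ENNReal.add_lt_top.2 ⟨by simp, hLp⟩
  have hε0 : ∀ i, ∫ ω, ε i ω ∂P = 0 := by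
    intro i
    have h1 : ∫ ω, ε i ω ∂P = ∫ x, x ∂(Measure.map (ε i) P) :=
      (integral_map (hmeas i).aemeasurable aestronglyMeasurable_id).symm
    have h2 : ∫ x, x ∂(Measure.map (ε 1) P) = ∫ ω, ε 1 ω ∂P :=
      integral_map (hmeas 1).aemeasurable aestronglyMeasurable_id
    rw [h1, hident i, h2]
    exact hcent
  -- the coefficient bound
  have hcoef : ∀ i : ℕ, 1 ≤ i → |a i| ^ p ≤ C₀ ^ p * (i : ℝ) ^ (-q) := by
    intro i hi
    have hi0 : (0:ℝ) ≤ (i:ℝ) := Nat.cast_nonneg i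
    have h2 : |a i| ^ p ≤ (C₀ * (i:ℝ) ^ (-(1 - d))) ^ p :=
      Real.rpow_le_rpow (abs_nonneg _) (ha i hi) hp0.le
    have h3 : (C₀ * (i:ℝ) ^ (-(1 - d))) ^ p = C₀ ^ p * ((i:ℝ) ^ (-(1 - d))) ^ p :=
      Real.mul_rpow hC₀.le (Real.rpow_nonneg hi0 _)
    have h4 : ((i:ℝ) ^ (-(1 - d))) ^ p = (i:ℝ) ^ (-q) := by
      rw [← Real.rpow_mul hi0, hqdef, neg_mul]
    rw [h3, h4] at h2
    exact h2
  -- the constant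
  set C : ℝ := 2 * p * Ep * C₀ ^ p / (q - 1) + 1 with hCdef
  have hC0p : (0:ℝ) < C₀ ^ p := Real.rpow_pos_of_pos hC₀ p
  have hCpos : 0 < C := by
    have h1 : 0 ≤ 2 * p * Ep * C₀ ^ p := by
      have := mul_nonneg (mul_nonneg (by linarith : (0:ℝ) ≤ 2 * p) hEp0) hC0p.le
      linarith
    have h2 : 0 ≤ 2 * p * Ep * C₀ ^ p / (q - 1) := div_nonneg h1 (by linarith)
    rw [hCdef]
    linarith
  refine ⟨C, hCpos, fun k hk => ?_⟩
  have hk0 : (0:ℝ) < (k:ℝ) := by exact_mod_cast Nat.lt_of_lt_of_le Nat.zero_lt_one hk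
  have hkq0 : (0:ℝ) ≤ (k:ℝ) ^ (1 - q) := Real.rpow_nonneg hk0.le _
  -- the summand family
  set X : ℕ → Ω → ℝ := fun i ω => a i * ε i ω with hXdef
  have hXm : ∀ i, Measurable (X i) := fun i => (hmeas i).const_mul (a i)
  have hXind : iIndepFun X P :=
    hindep.comp (fun i x => a i * x) (fun i => measurable_id.const_mul (a i))
  have hXabs : ∀ i, (fun ω => |X i ω| ^ p) = fun ω => |a i| ^ p * |ε i ω| ^ p := by
    intro i
    funext ω
    rw [hXdef]
    simp only
    rw [abs_mul, Real.mul_rpow (abs_nonneg _) (abs_nonneg _)]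
  have hXp : ∀ i, Integrable (fun ω => |X i ω| ^ p) P := by
    intro i
    rw [hXabs i]
    exact (Ihpε i).const_mul _
  have hX0 : ∀ i, ∫ ω, X i ω ∂P = 0 := by
    intro i
    rw [hXdef]
    simp only
    rw [MeasureTheory.integral_const_mul, hε0 i, mul_zero]
  have hXmom : ∀ i, ∫ ω, |X i ω| ^ p ∂P = |a i| ^ p * Ep := by
    intro i
    rw [hXabs i, MeasureTheory.integral_const_mul, hEp_i i]
  -- bound for each partial sum
  have hTle : ∀ m : ℕ,
      ∫⁻ ω, (‖∑ i ∈ Finset.Icc (k + 1) m, a i * ε i ω‖₊ : ℝ≥0∞) ^ p ∂P ≤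
        ENNReal.ofReal (C * (k : ℝ) ^ (1 - q)) := by
    intro m
    obtain ⟨hTint, hTbd⟩ := vbe_sum hp1 hp2 X hXm hXind hXp hX0 (Finset.Icc (k + 1) m)
    -- bound the real integral
    have hsum_le : ∑ i ∈ Finset.Icc (k + 1) m, ∫ ω, |X i ω| ^ p ∂P
        ≤ C₀ ^ p * Ep * ((k:ℝ) ^ (1 - q) / (q - 1)) := by
      calc ∑ i ∈ Finset.Icc (k + 1) m, ∫ ω, |X i ω| ^ p ∂P
          = ∑ i ∈ Finset.Icc (k + 1) m, |a i| ^ p * Ep :=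
            Finset.sum_congr rfl fun i _ => hXmom i
        _ ≤ ∑ i ∈ Finset.Icc (k + 1) m, C₀ ^ p * (i:ℝ) ^ (-q) * Ep := by
            apply Finset.sum_le_sum
            intro i hi
            have hi1 : 1 ≤ i := by
              have := (Finset.mem_Icc.1 hi).1
              omega
            exact mul_le_mul_of_nonneg_right (hcoef i hi1) hEp0
        _ = C₀ ^ p * Ep * ∑ i ∈ Finset.Icc (k + 1) m, (i:ℝ) ^ (-q) := by
            rw [Finset.mul_sum]
            apply Finset.sum_congr rfl
            intro i _
            ring
        _ ≤ C₀ ^ p * Ep * ((k:ℝ) ^ (1 - q) / (q - 1)) := by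
            apply mul_le_mul_of_nonneg_left (vbe_tail_sum hdp hk) (by positivity)
    have hreal : ∫ ω, |∑ i ∈ Finset.Icc (k + 1) m, X i ω| ^ p ∂P
        ≤ C * (k:ℝ) ^ (1 - q) := by
      calc ∫ ω, |∑ i ∈ Finset.Icc (k + 1) m, X i ω| ^ p ∂P
          ≤ 2 * p * ∑ i ∈ Finset.Icc (k + 1) m, ∫ ω, |X i ω| ^ p ∂P := hTbd
        _ ≤ 2 * p * (C₀ ^ p * Ep * ((k:ℝ) ^ (1 - q) / (q - 1))) := by
            apply mul_le_mul_of_nonneg_left hsum_le (by linarith)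
        _ = (2 * p * Ep * C₀ ^ p / (q - 1)) * (k:ℝ) ^ (1 - q) := by ring
        _ ≤ C * (k:ℝ) ^ (1 - q) := by
            rw [hCdef]
            nlinarith
    -- convert to lintegral
    have hTnn : 0 ≤ᵐ[P] fun ω => |∑ i ∈ Finset.Icc (k + 1) m, X i ω| ^ p :=
      Filter.Eventually.of_forall fun ω => Real.rpow_nonneg (abs_nonneg _) p
    have h1 := ofReal_integral_eq_lintegral_ofReal hTint hTnn
    have h2 : ∫⁻ ω, ENNReal.ofReal (|∑ i ∈ Finset.Icc (k + 1) m, X i ω| ^ p) ∂P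
        = ∫⁻ ω, (‖∑ i ∈ Finset.Icc (k + 1) m, a i * ε i ω‖₊ : ℝ≥0∞) ^ p ∂P :=
      lintegral_congr fun ω => hpt _
    calc ∫⁻ ω, (‖∑ i ∈ Finset.Icc (k + 1) m, a i * ε i ω‖₊ : ℝ≥0∞) ^ p ∂P
        = ENNReal.ofReal (∫ ω, |∑ i ∈ Finset.Icc (k + 1) m, X i ω| ^ p ∂P) := by
          rw [h1, h2]
      _ ≤ ENNReal.ofReal (C * (k : ℝ) ^ (1 - q)) := ENNReal.ofReal_le_ofReal hreal
  -- Fatou / liminf step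
  have hTmeas : ∀ m : ℕ,
      Measurable (fun ω => (‖∑ i ∈ Finset.Icc (k + 1) m, a i * ε i ω‖₊ : ℝ≥0∞) ^ p) := by
    intro m
    exact ((Finset.measurable_sum _ (fun i _ => hXm i)).nnnorm.coe_nnreal_ennreal).pow_const p
  have hae : (fun ω => (‖S k ω‖₊ : ℝ≥0∞) ^ p) =ᵐ[P]
      fun ω => Filter.liminf
        (fun m => (‖∑ i ∈ Finset.Icc (k + 1) m, a i * ε i ω‖₊ : ℝ≥0∞) ^ p) atTop := by
    filter_upwards [hS k] with ω hω
    have h1 : Tendsto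
        (fun m => (‖∑ i ∈ Finset.Icc (k + 1) m, a i * ε i ω‖₊ : ℝ≥0∞) ^ p) atTop
        (nhds ((‖S k ω‖₊ : ℝ≥0∞) ^ p)) := by
      apply (ENNReal.continuous_rpow_const.tendsto _).comp
      exact (ENNReal.continuous_coe.tendsto _).comp ((continuous_nnnorm.tendsto _).comp hω)
    exact h1.liminf_eq.symm
  calc ∫⁻ ω, (‖S k ω‖₊ : ℝ≥0∞) ^ p ∂P
      = ∫⁻ ω, Filter.liminf
          (fun m => (‖∑ i ∈ Finset.Icc (k + 1) m, a i * ε i ω‖₊ : ℝ≥0∞) ^ p) atTop ∂P :=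
        lintegral_congr_ae hae
    _ ≤ Filter.liminf
          (fun m => ∫⁻ ω, (‖∑ i ∈ Finset.Icc (k + 1) m, a i * ε i ω‖₊ : ℝ≥0∞) ^ p ∂P)
          atTop := lintegral_liminf_le hTmeas
    _ ≤ ENNReal.ofReal (C * (k : ℝ) ^ (1 - q)) :=
        liminf_le_of_frequently_le' (Filter.Frequently.of_forall hTle)
end

section
/- Let r ∈ [1,2], let (ℱ_k)_{k∈ℤ} be an increasing family of sub-σ-algebras of 𝒜, and let n ∈ ℕ. For t = 1,…,n let Z_t be ℱ_t-measurable real random variables with E|Z_t|^r < ∞ and E[Z_t] = 0, and suppose that for each t, E[Z_t | ℱ_ℓ] → 0 almost surely and in L^r(P) as ℓ → −∞. Then E|∑_{t=1}^n Z_t|^r ≤ 2 ∑_{k∈ℤ, k≤n} ( ∑_{t=max(k,1)}^n ‖P_k Z_t‖_{L^r(P)} )^r, where the sum over k is allowed to be infinite. -/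
open MeasureTheory Filter
open scoped ENNReal


private lemma real_rpow_add_le_add_rpow {p a b : ℝ} (ha : 0 ≤ a) (hb : 0 ≤ b)
    (hp : 0 ≤ p) (hp1 : p ≤ 1) : (a + b) ^ p ≤ a ^ p + b ^ p := by
  have h := NNReal.rpow_add_le_add_rpow a.toNNReal b.toNNReal hp hp1
  rw [← NNReal.coe_le_coe] at h
  rw [NNReal.coe_add, ← Real.toNNReal_add ha hb] at h
  rw [NNReal.coe_rpow, NNReal.coe_rpow, NNReal.coe_rpow] at h
  rwa [Real.coe_toNNReal _ (add_nonneg ha hb), Real.coe_toNNReal _ ha,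
    Real.coe_toNNReal _ hb] at h

section Scalar
variable {r : ℝ}

private lemma vbe_case1 (hr1 : 1 ≤ r) (hr2 : r ≤ 2) {u : ℝ} (hu : 0 ≤ u) :
    (1 + u) ^ r ≤ 1 + r * u + u ^ r := by
  have hr0 : (0:ℝ) < r := lt_of_lt_of_le one_pos hr1
  set f : ℝ → ℝ := fun u => 1 + r * u + u ^ r - (1 + u) ^ r with hf
  have key : ∀ x ∈ Set.Ioi (0:ℝ), HasDerivAt f
      (r + r * x ^ (r-1) - r * (1 + x) ^ (r-1) * 1) x := by
    intro x hx
    have hx0 : (0:ℝ) < x := hx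
    have h1 : HasDerivAt (fun u : ℝ => 1 + r * u) r x := by
      simpa using ((hasDerivAt_id x).const_mul r).const_add 1
    have h2 : HasDerivAt (fun u : ℝ => u ^ r) (r * x ^ (r-1)) x :=
      Real.hasDerivAt_rpow_const (Or.inl hx0.ne')
    have h3 : HasDerivAt (fun u : ℝ => (1 + u) ^ r) (r * (1 + x) ^ (r-1) * 1) x := by
      have hbase : HasDerivAt (fun u : ℝ => 1 + u) 1 x := (hasDerivAt_id x).const_add 1
      exact (Real.hasDerivAt_rpow_const (x := 1 + x) (p := r)
        (Or.inl (by positivity))).comp x hbase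
    exact (h1.add h2).sub h3
  have hcont : Continuous f := by
    rw [hf]
    have h1 : Continuous fun u : ℝ => u ^ r := by
      rw [continuous_iff_continuousAt]
      exact fun x => Real.continuousAt_rpow_const x r (Or.inr hr0.le)
    exact ((continuous_const.add (continuous_const.mul continuous_id')).add h1).sub
      (h1.comp (continuous_const.add continuous_id'))
  have hmono : MonotoneOn f (Set.Ici (0:ℝ)) := by
    apply monotoneOn_of_deriv_nonneg (convex_Ici 0) hcont.continuousOn
    · intro x hx
      rw [interior_Ici] at hx
      exact (key x hx).differentiableAt.differentiableWithinAt
    · intro x hx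
      rw [interior_Ici] at hx
      rw [(key x hx).deriv]
      have hsub : (1 + x) ^ (r-1) ≤ 1 ^ (r-1) + x ^ (r-1) :=
        real_rpow_add_le_add_rpow zero_le_one (le_of_lt hx) (by linarith) (by linarith)
      rw [Real.one_rpow] at hsub
      nlinarith [hsub, hr0.le]
  have h0 : f 0 = 0 := by
    simp [hf, Real.zero_rpow hr0.ne']
  have := hmono (Set.mem_Ici.mpr le_rfl) (Set.mem_Ici.mpr hu) hu
  rw [h0] at this
  simp only [hf] at this
  linarith

private lemma vbe_case2 (hr1 : 1 ≤ r) (hr2 : r ≤ 2) {v : ℝ} (hv0 : 0 ≤ v) (hv1 : v ≤ 1) :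
    (1 - v) ^ r ≤ 1 - r * v + 2 * v ^ r := by
  have hr0 : (0:ℝ) < r := lt_of_lt_of_le one_pos hr1
  set f : ℝ → ℝ := fun v => 2 * v ^ r + 1 - r * v - (1 - v) ^ r with hf
  have key : ∀ x ∈ Set.Ioo (0:ℝ) 1, HasDerivAt f
      (2 * (r * x ^ (r-1)) - r - r * (1 - x) ^ (r-1) * (-1)) x := by
    intro x hx
    have hx0 : (0:ℝ) < x := hx.1
    have hx1 : x < 1 := hx.2
    have h2 : HasDerivAt (fun u : ℝ => 2 * u ^ r) (2 * (r * x ^ (r-1))) x :=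
      (Real.hasDerivAt_rpow_const (Or.inl hx0.ne')).const_mul 2
    have h1 : HasDerivAt (fun u : ℝ => 2 * u ^ r + 1 - r * u)
        (2 * (r * x ^ (r-1)) - r) x := by
      simpa only [mul_one, Pi.sub_def] using (h2.add_const 1).sub (((hasDerivAt_id' x).const_mul r))
    have h3 : HasDerivAt (fun u : ℝ => (1 - u) ^ r) (r * (1 - x) ^ (r-1) * (-1)) x := by
      have hbase : HasDerivAt (fun u : ℝ => 1 - u) (-1) x := by
        simpa using (hasDerivAt_id x).const_sub 1
      exact (Real.hasDerivAt_rpow_const (x := 1 - x) (p := r)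
        (Or.inl (ne_of_gt (by linarith : (0:ℝ) < 1 - x)))).comp x hbase
    exact h1.sub h3
  have hcont : Continuous f := by
    rw [hf]
    have h1 : Continuous fun u : ℝ => u ^ r := by
      rw [continuous_iff_continuousAt]
      exact fun x => Real.continuousAt_rpow_const x r (Or.inr hr0.le)
    exact ((((continuous_const.mul h1)).add continuous_const).sub
      (continuous_const.mul continuous_id')).sub (h1.comp (continuous_const.sub continuous_id'))
  have hmono : MonotoneOn f (Set.Icc (0:ℝ) 1) := by
    apply monotoneOn_of_deriv_nonneg (convex_Icc 0 1) hcont.continuousOn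
    · intro x hx
      rw [interior_Icc] at hx
      exact (key x hx).differentiableAt.differentiableWithinAt
    · intro x hx
      rw [interior_Icc] at hx
      rw [(key x hx).deriv]
      have e1 : x ≤ x ^ (r-1) := by
        calc x = x ^ (1:ℝ) := (Real.rpow_one x).symm
        _ ≤ x ^ (r-1) := Real.rpow_le_rpow_of_exponent_ge hx.1 hx.2.le (by linarith)
      have e2 : 1 - x ≤ (1 - x) ^ (r-1) := by
        calc 1 - x = (1 - x) ^ (1:ℝ) := (Real.rpow_one _).symm
        _ ≤ (1 - x) ^ (r-1) := Real.rpow_le_rpow_of_exponent_ge (by linarith [hx.2])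
          (by linarith [hx.1]) (by linarith)
      nlinarith [e1, e2, hr0.le, hx.1.le]
  have h0 : f 0 = 0 := by
    simp [hf, Real.zero_rpow hr0.ne']
  have := hmono (Set.mem_Icc.mpr ⟨le_rfl, zero_le_one⟩) (Set.mem_Icc.mpr ⟨hv0, hv1⟩) hv0
  rw [h0] at this
  simp only [hf] at this
  linarith

private lemma vbe_case3 (hr1 : 1 ≤ r) (hr2 : r ≤ 2) {v : ℝ} (hv : 1 ≤ v) :
    r * v ≤ v ^ r + r - 1 := by
  have hr0 : (0:ℝ) < r := lt_of_lt_of_le one_pos hr1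
  set f : ℝ → ℝ := fun v => v ^ r + (r - 1) - r * v with hf
  have key : ∀ x ∈ Set.Ioi (1:ℝ), HasDerivAt f (r * x ^ (r-1) - r) x := by
    intro x hx
    have hx0 : (0:ℝ) < x := lt_trans one_pos hx
    have h2 : HasDerivAt (fun u : ℝ => u ^ r) (r * x ^ (r-1)) x :=
      Real.hasDerivAt_rpow_const (Or.inl hx0.ne')
    simpa only [mul_one, hf, Pi.sub_def] using ((h2.add_const (r - 1)).sub ((hasDerivAt_id' x).const_mul r))
  have hcont : Continuous f := by
    rw [hf]
    have h1 : Continuous fun u : ℝ => u ^ r := by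
      rw [continuous_iff_continuousAt]
      exact fun x => Real.continuousAt_rpow_const x r (Or.inr hr0.le)
    exact (h1.add continuous_const).sub (continuous_const.mul continuous_id')
  have hmono : MonotoneOn f (Set.Ici (1:ℝ)) := by
    apply monotoneOn_of_deriv_nonneg (convex_Ici 1) hcont.continuousOn
    · intro x hx
      rw [interior_Ici] at hx
      exact (key x hx).differentiableAt.differentiableWithinAt
    · intro x hx
      rw [interior_Ici] at hx
      rw [(key x hx).deriv]
      have e1 : (1:ℝ) ≤ x ^ (r-1) := by
        calc (1:ℝ) = 1 ^ (r-1) := (Real.one_rpow _).symm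
        _ ≤ x ^ (r-1) := Real.rpow_le_rpow zero_le_one (le_of_lt hx) (by linarith)
      nlinarith [e1, hr0.le]
  have h0 : f 1 = 0 := by simp [hf, Real.one_rpow]
  have := hmono (Set.mem_Ici.mpr le_rfl) (Set.mem_Ici.mpr hv) hv
  rw [h0] at this
  simp only [hf] at this
  linarith

/-- normalized pointwise von Bahr–Esseen inequality -/
private lemma vbe_normalized (hr1 : 1 ≤ r) (hr2 : r ≤ 2) (u : ℝ) :
    |1 + u| ^ r ≤ 1 + r * u + 2 * |u| ^ r := by
  have hr0 : (0:ℝ) < r := lt_of_lt_of_le one_pos hr1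
  rcases le_or_gt 0 u with hu | hu
  · rw [abs_of_nonneg (by linarith), abs_of_nonneg hu]
    have := vbe_case1 hr1 hr2 hu
    nlinarith [Real.rpow_nonneg hu r]
  rcases le_or_gt (-1) u with hu1 | hu1
  · rw [abs_of_nonneg (by linarith), abs_of_neg hu]
    have h := vbe_case2 hr1 hr2 (v := -u) (by linarith) (by linarith)
    calc (1 + u) ^ r = (1 - (-u)) ^ r := by ring_nf
    _ ≤ 1 - r * (-u) + 2 * (-u) ^ r := h
    _ = 1 + r * u + 2 * (-u) ^ r := by ring
  · rw [abs_of_neg (by linarith), abs_of_neg hu]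
    have hv : (1:ℝ) ≤ -u := by linarith
    have h3 := vbe_case3 hr1 hr2 hv
    have hmono : (-(1+u)) ^ r ≤ (-u) ^ r :=
      Real.rpow_le_rpow (by linarith) (by linarith) hr0.le
    nlinarith [hmono, h3]

/-- pointwise von Bahr–Esseen inequality -/
private lemma vbe_pointwise_s4 (hr1 : 1 ≤ r) (hr2 : r ≤ 2) (x y : ℝ) :
    |x + y| ^ r ≤ |x| ^ r + (r * Real.sign x * |x| ^ (r - 1)) * y + 2 * |y| ^ r := by
  have hr0 : (0:ℝ) < r := lt_of_lt_of_le one_pos hr1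
  -- main case x > 0
  have main : ∀ x y : ℝ, 0 < x →
      |x + y| ^ r ≤ |x| ^ r + (r * Real.sign x * |x| ^ (r - 1)) * y + 2 * |y| ^ r := by
    intro x y hx
    have hxne : x ≠ 0 := hx.ne'
    have h := vbe_normalized hr1 hr2 (y / x)
    have hxr : (0:ℝ) < x ^ r := Real.rpow_pos_of_pos hx r
    have h2 := mul_le_mul_of_nonneg_right h hxr.le
    have e1 : |1 + y / x| ^ r * x ^ r = |x + y| ^ r := by
      have hxy : (1 + y / x) * x = x + y := by field_simp
      rw [show x ^ r = |x| ^ r by rw [abs_of_pos hx],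
        ← Real.mul_rpow (abs_nonneg _) (abs_nonneg _), ← abs_mul, hxy]
    have e2 : |y / x| ^ r * x ^ r = |y| ^ r := by
      have hxy : y / x * x = y := by field_simp
      rw [show x ^ r = |x| ^ r by rw [abs_of_pos hx],
        ← Real.mul_rpow (abs_nonneg _) (abs_nonneg _), ← abs_mul, hxy]
    have e3 : r * (y / x) * x ^ r = (r * Real.sign x * |x| ^ (r - 1)) * y := by
      rw [Real.sign_of_pos hx, abs_of_pos hx, Real.rpow_sub hx, Real.rpow_one]
      field_simp
    calc |x + y| ^ r = |1 + y / x| ^ r * x ^ r := e1.symm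
    _ ≤ (1 + r * (y / x) + 2 * |y / x| ^ r) * x ^ r := h2
    _ = x ^ r + r * (y / x) * x ^ r + 2 * (|y / x| ^ r * x ^ r) := by ring
    _ = |x| ^ r + (r * Real.sign x * |x| ^ (r - 1)) * y + 2 * |y| ^ r := by
        rw [e2, e3, abs_of_pos hx]
  rcases lt_trichotomy x 0 with hx | hx | hx
  · have h := main (-x) (-y) (by linarith)
    rw [show -x + -y = -(x+y) by ring, abs_neg, abs_neg, abs_neg] at h
    rw [Real.sign_neg] at h
    calc |x + y| ^ r ≤ |x| ^ r + (r * -Real.sign x * |x| ^ (r - 1)) * (-y) + 2 * |y| ^ r := h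
    _ = |x| ^ r + (r * Real.sign x * |x| ^ (r - 1)) * y + 2 * |y| ^ r := by ring
  · subst hx
    rw [Real.sign_zero, zero_add, abs_zero, Real.zero_rpow hr0.ne']
    have : (0:ℝ) ≤ |y| ^ r := Real.rpow_nonneg (abs_nonneg y) r
    nlinarith
  · exact main x y hx

end Scalar


section StepLemma
variable {Ω : Type*} {m0 : MeasurableSpace Ω} {P : Measure Ω} {r : ℝ}

private lemma lintegral_nnnorm_rpow_eq (hr1 : 1 ≤ r) {f : Ω → ℝ}
    (hf : MemLp f (ENNReal.ofReal r) P) :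
    ∫⁻ ω, (‖f ω‖₊ : ℝ≥0∞) ^ r ∂P = ENNReal.ofReal (∫ ω, |f ω| ^ r ∂P) := by
  have hr0 : (0:ℝ) < r := lt_of_lt_of_le one_pos hr1
  have hne : ENNReal.ofReal r ≠ 0 := by
    rw [Ne, ENNReal.ofReal_eq_zero]; linarith
  have hint : Integrable (fun ω => |f ω| ^ r) P := by
    have h := hf.integrable_norm_rpow hne ENNReal.ofReal_ne_top
    simpa [ENNReal.toReal_ofReal hr0.le, Real.norm_eq_abs] using h
  rw [MeasureTheory.ofReal_integral_eq_lintegral_ofReal hint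
    (Eventually.of_forall fun ω => by positivity)]
  apply lintegral_congr
  intro ω
  rw [← enorm_eq_nnnorm, Real.enorm_eq_ofReal_abs, ← ENNReal.ofReal_rpow_of_nonneg (abs_nonneg _) hr0.le]

private lemma measurable_realSign : Measurable Real.sign := by
  have h : Real.sign = fun x : ℝ => if x < 0 then (-1:ℝ) else if 0 < x then 1 else 0 := rfl
  rw [h]
  exact Measurable.ite measurableSet_Iio measurable_const
    (Measurable.ite measurableSet_Ioi measurable_const measurable_const)

/-- the inductive step: if `X` is `m`-measurable and `E[Y|m] = 0`, then
`E|X+Y|^r ≤ E|X|^r + 2 E|Y|^r`. -/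
private lemma vbe_step [IsProbabilityMeasure P]
    (hr1 : 1 ≤ r) (hr2 : r ≤ 2) {m : MeasurableSpace Ω} (hm : m ≤ m0)
    {X Y : Ω → ℝ} (hXm : StronglyMeasurable[m] X)
    (hX : MemLp X (ENNReal.ofReal r) P) (hY : MemLp Y (ENNReal.ofReal r) P)
    (hY0 : P[Y|m] =ᵐ[P] 0) :
    ∫⁻ ω, (‖X ω + Y ω‖₊ : ℝ≥0∞) ^ r ∂P ≤
      ∫⁻ ω, (‖X ω‖₊ : ℝ≥0∞) ^ r ∂P + 2 * ∫⁻ ω, (‖Y ω‖₊ : ℝ≥0∞) ^ r ∂P := by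
  have hr0 : (0:ℝ) < r := lt_of_lt_of_le one_pos hr1
  have hne : ENNReal.ofReal r ≠ 0 := by rw [Ne, ENNReal.ofReal_eq_zero]; linarith
  have hp1 : 1 ≤ ENNReal.ofReal r := ENNReal.one_le_ofReal.mpr hr1
  set G : Ω → ℝ := fun ω => r * Real.sign (X ω) * |X ω| ^ (r - 1) with hG
  -- measurability of G
  have hrpow_cont : Continuous fun x : ℝ => x ^ (r - 1) :=
    continuous_iff_continuousAt.mpr fun x =>
      Real.continuousAt_rpow_const x _ (Or.inr (by linarith))
  have hGm : StronglyMeasurable[m] G := by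
    apply Measurable.stronglyMeasurable
    exact (measurable_const.mul (measurable_realSign.comp hXm.measurable)).mul
      (hrpow_cont.measurable.comp hXm.measurable.norm)
  have hGm0 : AEStronglyMeasurable[m0] G P := (hGm.mono hm).aestronglyMeasurable
  have hYi : Integrable Y P := hY.integrable hp1
  -- bound on G
  have hGbound : ∀ ω, ‖G ω‖ ≤ r * ‖(|X ω| ^ (r - 1))‖ := by
    intro ω
    have hs : |Real.sign (X ω)| ≤ 1 := by
      rcases Real.sign_apply_eq (X ω) with h | h | h <;> rw [h] <;> norm_num
    have hpow : (0:ℝ) ≤ |X ω| ^ (r - 1) := Real.rpow_nonneg (abs_nonneg _) _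
    calc ‖G ω‖ = |r| * |Real.sign (X ω)| * |(|X ω| ^ (r - 1))| := by
          rw [hG, Real.norm_eq_abs, abs_mul, abs_mul]
    _ ≤ |r| * 1 * |(|X ω| ^ (r - 1))| := by
          apply mul_le_mul_of_nonneg_right _ (abs_nonneg _)
          exact mul_le_mul_of_nonneg_left hs (abs_nonneg _)
    _ = r * ‖(|X ω| ^ (r - 1))‖ := by
          rw [mul_one, abs_of_nonneg hr0.le, Real.norm_eq_abs]
  -- integrability of G * Y
  have hGY : Integrable (fun ω => G ω * Y ω) P := by
    rcases eq_or_lt_of_le hr1 with h1 | h1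
    · -- r = 1 : G is bounded
      subst h1
      apply hYi.bdd_mul (c := 1) hGm0
      apply Eventually.of_forall
      intro ω
      simpa using hGbound ω
    · -- r > 1 : Hölder
      have hq : (0:ℝ) < r / (r - 1) := div_pos hr0 (by linarith)
      set q : ℝ≥0∞ := ENNReal.ofReal (r / (r - 1)) with hqdef
      have hGq : MemLp G q P := by
        have habs : MemLp (fun ω => ‖X ω‖ ^ (r - 1)) q P := by
          constructor
          · exact (hrpow_cont.comp_stronglyMeasurable
              (hXm.mono hm).norm).aestronglyMeasurable
          · rw [eLpNorm_norm_rpow X (by linarith : (0:ℝ) < r - 1)]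
            have hqr : q * ENNReal.ofReal (r - 1) = ENNReal.ofReal r := by
              rw [hqdef, ← ENNReal.ofReal_mul hq.le]
              congr 1
              exact div_mul_cancel₀ r (by linarith : r - 1 ≠ 0)
            rw [hqr]
            exact ENNReal.rpow_lt_top_of_nonneg (by linarith) hX.2.ne
        apply (habs.const_mul r).of_le (f := G) ((hGm.mono hm).aestronglyMeasurable)
        apply Eventually.of_forall
        intro ω
        have hb := hGbound ω
        have hpow : (0:ℝ) ≤ |X ω| ^ (r - 1) := Real.rpow_nonneg (abs_nonneg _) _
        simp only [Real.norm_eq_abs] at hb ⊢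
        have hrhs : abs (r * abs (X ω) ^ (r - 1)) = r * abs (abs (X ω) ^ (r - 1)) := by
          rw [abs_mul, abs_of_nonneg hr0.le]
        rw [hrhs]
        exact hb
      have hconj : (1:ℝ≥0∞) / 1 = 1 / q + 1 / ENNReal.ofReal r := by
        rw [hqdef, one_div, one_div, one_div,
          ← ENNReal.ofReal_inv_of_pos hq, ← ENNReal.ofReal_inv_of_pos hr0, inv_one]
        rw [← ENNReal.ofReal_add (inv_nonneg.mpr hq.le) (inv_nonneg.mpr hr0.le)]
        rw [show (r / (r-1))⁻¹ + r⁻¹ = 1 by field_simp; ring]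
        exact (ENNReal.ofReal_one).symm
      haveI : ENNReal.HolderTriple q (ENNReal.ofReal r) 1 := ⟨by simpa [one_div] using hconj.symm⟩
      have := hY.smul (r := 1) hGq
      rw [memLp_one_iff_integrable] at this
      exact this
  -- orthogonality
  have horth : ∫ ω, G ω * Y ω ∂P = 0 := by
    have hpull : P[(fun ω => G ω * Y ω)|m] =ᵐ[P] fun ω => G ω * (P[Y|m]) ω := by
      have := condExp_mul_of_stronglyMeasurable_left (μ := P) hGm hGY hYi
      exact this
    have hz : P[(fun ω => G ω * Y ω)|m] =ᵐ[P] 0 := by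
      filter_upwards [hpull, hY0] with ω h1 h2
      rw [h1, h2]
      simp
    have hint := integral_condExp (μ := P) (f := fun ω => G ω * Y ω) hm
    rw [← hint, integral_congr_ae hz]
    simp
  -- pointwise inequality and integration
  have iXY : Integrable (fun ω => |X ω + Y ω| ^ r) P := by
    have h := (hX.add hY).integrable_norm_rpow hne ENNReal.ofReal_ne_top
    simpa [ENNReal.toReal_ofReal hr0.le, Real.norm_eq_abs] using h
  have iX : Integrable (fun ω => |X ω| ^ r) P := by
    have h := hX.integrable_norm_rpow hne ENNReal.ofReal_ne_top
    simpa [ENNReal.toReal_ofReal hr0.le, Real.norm_eq_abs] using h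
  have iY : Integrable (fun ω => |Y ω| ^ r) P := by
    have h := hY.integrable_norm_rpow hne ENNReal.ofReal_ne_top
    simpa [ENNReal.toReal_ofReal hr0.le, Real.norm_eq_abs] using h
  have hmono : ∫ ω, |X ω + Y ω| ^ r ∂P ≤
      ∫ ω, (|X ω| ^ r + G ω * Y ω + 2 * |Y ω| ^ r) ∂P := by
    apply integral_mono iXY ((iX.add hGY).add (iY.const_mul 2))
    intro ω
    exact vbe_pointwise_s4 hr1 hr2 (X ω) (Y ω)
  have hsplit2 : ∫ ω, (|X ω| ^ r + G ω * Y ω + 2 * |Y ω| ^ r) ∂P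
      = (∫ ω, (|X ω| ^ r + G ω * Y ω) ∂P) + ∫ ω, 2 * |Y ω| ^ r ∂P :=
    integral_add (iX.add hGY) (iY.const_mul 2)
  have hsplit3 : ∫ ω, (|X ω| ^ r + G ω * Y ω) ∂P
      = (∫ ω, |X ω| ^ r ∂P) + ∫ ω, G ω * Y ω ∂P := integral_add iX hGY
  have hsplit4 : ∫ ω, 2 * |Y ω| ^ r ∂P = 2 * ∫ ω, |Y ω| ^ r ∂P := integral_const_mul 2 _
  have hfinal : ∫ ω, |X ω + Y ω| ^ r ∂P ≤
      (∫ ω, |X ω| ^ r ∂P) + 2 * ∫ ω, |Y ω| ^ r ∂P := by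
    linarith [hmono, hsplit2, hsplit3, hsplit4, horth]
  -- convert to lintegrals
  have hXY : MemLp (fun ω => X ω + Y ω) (ENNReal.ofReal r) P := hX.add hY
  rw [lintegral_nnnorm_rpow_eq hr1 hXY, lintegral_nnnorm_rpow_eq hr1 hX,
    lintegral_nnnorm_rpow_eq hr1 hY]
  have h2 : (2:ℝ≥0∞) = ENNReal.ofReal 2 := by norm_num
  rw [h2, ← ENNReal.ofReal_mul (by norm_num : (0:ℝ) ≤ 2),
    ← ENNReal.ofReal_add (integral_nonneg fun ω => by positivity)
      (mul_nonneg (by norm_num) (integral_nonneg fun ω => by positivity))]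
  exact ENNReal.ofReal_le_ofReal hfinal
end StepLemma

private lemma telescope_sum (f : ℤ → ℝ) (m : ℤ) :
    ∀ n, m ≤ n → ∑ k ∈ Finset.Icc (m+1) n, (f k - f (k-1)) = f n - f m := by
  refine Int.le_induction ?_ ?_
  · rw [Finset.Icc_eq_empty (by omega)]; simp
  · intro n hn ih
    have hins : Finset.Icc (m+1) (n+1) = insert (n+1) (Finset.Icc (m+1) n) := by
      ext x; simp only [Finset.mem_Icc, Finset.mem_insert]; omega
    have hnm : (n+1) ∉ Finset.Icc (m+1) n := by simp [Finset.mem_Icc]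
    rw [hins, Finset.sum_insert hnm, ih]
    have : (n : ℤ) + 1 - 1 = n := by ring
    rw [this]
    ring

private lemma vbe_finite {Ω : Type*} {m0 : MeasurableSpace Ω} (P : Measure Ω)
    [IsProbabilityMeasure P] {r : ℝ} (hr1 : 1 ≤ r) (hr2 : r ≤ 2)
    (ℱ : ℤ → MeasurableSpace Ω) (hmono : Monotone ℱ) (hle : ∀ k, ℱ k ≤ m0)
    (d : ℤ → Ω → ℝ) (m : ℤ) :
    ∀ n, m ≤ n →
      (∀ k, m < k → k ≤ n → StronglyMeasurable[ℱ k] (d k)) →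
      (∀ k, m < k → k ≤ n → MemLp (d k) (ENNReal.ofReal r) P) →
      (∀ k, m < k → k ≤ n → P[d k|ℱ (k-1)] =ᵐ[P] 0) →
      ∫⁻ ω, (‖∑ k ∈ Finset.Icc (m+1) n, d k ω‖₊ : ℝ≥0∞) ^ r ∂P ≤
        2 * ∑ k ∈ Finset.Icc (m+1) n, ∫⁻ ω, (‖d k ω‖₊ : ℝ≥0∞) ^ r ∂P := by
  have hr0 : (0:ℝ) < r := lt_of_lt_of_le one_pos hr1
  refine Int.le_induction ?_ ?_
  · intro _ _ _
    rw [Finset.Icc_eq_empty (by omega)]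
    simp [ENNReal.zero_rpow_of_pos hr0]
  · intro n hn ih hSM hLp h0
    have hins : Finset.Icc (m+1) (n+1) = insert (n+1) (Finset.Icc (m+1) n) := by
      ext x; simp only [Finset.mem_Icc, Finset.mem_insert]; omega
    have hnm : (n+1) ∉ Finset.Icc (m+1) n := by simp [Finset.mem_Icc]
    have hXm : StronglyMeasurable[ℱ n] (fun ω => ∑ k ∈ Finset.Icc (m+1) n, d k ω) := by
      refine Finset.stronglyMeasurable_fun_sum _ fun k hk => ?_
      rw [Finset.mem_Icc] at hk
      exact (hSM k (by omega) (by omega)).mono (hmono (by omega))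
    have hXp : MemLp (fun ω => ∑ k ∈ Finset.Icc (m+1) n, d k ω) (ENNReal.ofReal r) P := by
      refine memLp_finsetSum _ fun k hk => ?_
      rw [Finset.mem_Icc] at hk
      exact hLp k (by omega) (by omega)
    have hY0 : P[d (n+1)|ℱ n] =ᵐ[P] 0 := by
      have := h0 (n+1) (by omega) le_rfl
      rwa [show (n:ℤ) + 1 - 1 = n by ring] at this
    have step := vbe_step hr1 hr2 (hle n) hXm hXp (hLp (n+1) (by omega) le_rfl) hY0
    have ihh := ih (fun k h1 h2 => hSM k h1 (by omega))
      (fun k h1 h2 => hLp k h1 (by omega)) (fun k h1 h2 => h0 k h1 (by omega))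
    calc ∫⁻ ω, (‖∑ k ∈ Finset.Icc (m+1) (n+1), d k ω‖₊ : ℝ≥0∞) ^ r ∂P
        = ∫⁻ ω, (‖(∑ k ∈ Finset.Icc (m+1) n, d k ω) + d (n+1) ω‖₊ : ℝ≥0∞) ^ r ∂P := by
          apply lintegral_congr; intro ω
          rw [hins, Finset.sum_insert hnm]
          ring_nf
    _ ≤ ∫⁻ ω, (‖∑ k ∈ Finset.Icc (m+1) n, d k ω‖₊ : ℝ≥0∞) ^ r ∂P
          + 2 * ∫⁻ ω, (‖d (n+1) ω‖₊ : ℝ≥0∞) ^ r ∂P := step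
    _ ≤ (2 * ∑ k ∈ Finset.Icc (m+1) n, ∫⁻ ω, (‖d k ω‖₊ : ℝ≥0∞) ^ r ∂P)
          + 2 * ∫⁻ ω, (‖d (n+1) ω‖₊ : ℝ≥0∞) ^ r ∂P := add_le_add_left ihh _
    _ = 2 * ∑ k ∈ Finset.Icc (m+1) (n+1), ∫⁻ ω, (‖d k ω‖₊ : ℝ≥0∞) ^ r ∂P := by
          rw [hins, Finset.sum_insert hnm]
          ring

/-- Martingale-projection decomposition bound (Lemma C.3 of the paper): for an adapted
centered family `(Z_t)_{1 ≤ t ≤ n}` in `L^r(P)`, `r ∈ [1,2]`, whose conditional expectations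
vanish in the remote past, `E|∑_{t=1}^n Z_t|^r ≤ 2 ∑_{k ≤ n} (∑_{t=max(k,1)}^n ‖P_k Z_t‖_r)^r`
where `P_k Y = E[Y|ℱ_k] - E[Y|ℱ_{k-1}]`. -/
theorem martingale_projection_decomposition_bound
    {Ω : Type*} {m0 : MeasurableSpace Ω} (P : Measure Ω) [IsProbabilityMeasure P]
    (r : ℝ) (hr1 : 1 ≤ r) (hr2 : r ≤ 2)
    (ℱ : ℤ → MeasurableSpace Ω) (hmono : Monotone ℱ) (hle : ∀ k, ℱ k ≤ m0)
    (n : ℕ) (Z : ℤ → Ω → ℝ)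
    (hadapt : ∀ t : ℤ, 1 ≤ t → t ≤ (n : ℤ) → StronglyMeasurable[ℱ t] (Z t))
    (hLp : ∀ t : ℤ, 1 ≤ t → t ≤ (n : ℤ) → MemLp (Z t) (ENNReal.ofReal r) P)
    (hcent : ∀ t : ℤ, 1 ≤ t → t ≤ (n : ℤ) → ∫ ω, Z t ω ∂P = 0)
    (hasconv : ∀ t : ℤ, 1 ≤ t → t ≤ (n : ℤ) →
      ∀ᵐ ω ∂P, Tendsto (fun ℓ : ℤ => (P[Z t|ℱ ℓ]) ω) atBot (nhds 0))
    (hLrconv : ∀ t : ℤ, 1 ≤ t → t ≤ (n : ℤ) →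
      Tendsto (fun ℓ : ℤ => eLpNorm (P[Z t|ℱ ℓ]) (ENNReal.ofReal r) P) atBot (nhds 0)) :
    ∫⁻ ω, (‖∑ t ∈ Finset.Icc (1 : ℤ) (n : ℤ), Z t ω‖₊ : ℝ≥0∞) ^ r ∂P ≤
      2 * ∑' k : {k : ℤ // k ≤ (n : ℤ)},
        (∑ t ∈ Finset.Icc (max k.1 1) (n : ℤ),
          eLpNorm (fun ω => (P[Z t|ℱ k.1]) ω - (P[Z t|ℱ (k.1 - 1)]) ω)
            (ENNReal.ofReal r) P) ^ r := by
  classical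
  have hr0 : (0:ℝ) < r := lt_of_lt_of_le one_pos hr1
  set p : ℝ≥0∞ := ENNReal.ofReal r with hpdef
  have hpne : p ≠ 0 := by rw [hpdef, Ne, ENNReal.ofReal_eq_zero]; linarith
  have hptop : p ≠ ∞ := ENNReal.ofReal_ne_top
  have hp1 : 1 ≤ p := ENNReal.one_le_ofReal.mpr hr1
  set N : ℤ := (n : ℤ) with hNdef
  -- the eLpNorm-lintegral dictionary
  have hel : ∀ f : Ω → ℝ, (eLpNorm f p P) ^ r = ∫⁻ ω, (‖f ω‖₊ : ℝ≥0∞) ^ r ∂P := by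
    intro f
    rw [eLpNorm_eq_lintegral_rpow_enorm_toReal hpne hptop, hpdef, ENNReal.toReal_ofReal hr0.le,
      ← ENNReal.rpow_mul, one_div, inv_mul_cancel₀ (ne_of_gt hr0), ENNReal.rpow_one]
    rfl
  -- basic facts about S
  set S : Ω → ℝ := fun ω => ∑ t ∈ Finset.Icc (1:ℤ) N, Z t ω with hSdef
  have hSfun : S = ∑ t ∈ Finset.Icc (1:ℤ) N, Z t := by
    funext ω; rw [hSdef]; simp [Finset.sum_apply]
  have hSM : StronglyMeasurable[ℱ N] S := by
    rw [hSdef]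
    refine Finset.stronglyMeasurable_fun_sum _ fun t ht => ?_
    rw [Finset.mem_Icc] at ht
    exact (hadapt t ht.1 ht.2).mono (hmono ht.2)
  have hZint : ∀ t, 1 ≤ t → t ≤ N → Integrable (Z t) P :=
    fun t h1 h2 => (hLp t h1 h2).integrable hp1
  have hSmem : MemLp S p P := by
    rw [hSdef]
    exact memLp_finsetSum _ fun t ht => by
      rw [Finset.mem_Icc] at ht; exact hLp t ht.1 ht.2
  have hSint : Integrable S P := hSmem.integrable hp1
  -- conditional expectations of S
  have hcond : ∀ j : ℤ, P[S|ℱ j] =ᵐ[P] ∑ t ∈ Finset.Icc (1:ℤ) N, P[Z t|ℱ j] := by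
    intro j
    rw [hSfun]
    exact condExp_finsetSum (fun t ht => by
      rw [Finset.mem_Icc] at ht; exact hZint t ht.1 ht.2) _
  set T : ℝ≥0∞ := ∑' k : {k : ℤ // k ≤ N},
        (∑ t ∈ Finset.Icc (max k.1 1) N,
          eLpNorm (fun ω => (P[Z t|ℱ k.1]) ω - (P[Z t|ℱ (k.1 - 1)]) ω) p P) ^ r with hTdef
  show ∫⁻ ω, (‖S ω‖₊ : ℝ≥0∞) ^ r ∂P ≤ 2 * T
  rcases eq_or_ne T ∞ with hT | hT
  · rw [hT]
    simp
  -- notation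
  set a : ℤ → ℝ≥0∞ := fun k => ∑ t ∈ Finset.Icc (max k 1) N,
      eLpNorm (fun ω => (P[Z t|ℱ k]) ω - (P[Z t|ℱ (k - 1)]) ω) p P with hadef
  have hbT : ∀ k (hk : k ≤ N), (a k) ^ r ≤ T := by
    intro k hk
    rw [hTdef]
    exact ENNReal.le_tsum (⟨k, hk⟩ : {k : ℤ // k ≤ N})
  have haT : ∀ k, k ≤ N → a k < ∞ := by
    intro k hk
    have h1 : (a k) ^ r < ∞ := lt_of_le_of_lt (hbT k hk) (lt_top_iff_ne_top.mpr hT)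
    exact (ENNReal.rpow_lt_top_iff_of_pos hr0).mp h1
  -- the projections of S
  set D : ℤ → Ω → ℝ := fun k ω => (P[S|ℱ k]) ω - (P[S|ℱ (k-1)]) ω with hDdef
  have hDSM : ∀ k, StronglyMeasurable[ℱ k] (D k) := fun k =>
    stronglyMeasurable_condExp.sub (stronglyMeasurable_condExp.mono (hmono (by omega)))
  have hD0 : ∀ k : ℤ, P[D k|ℱ (k-1)] =ᵐ[P] 0 := by
    intro k
    have hsub : P[D k|ℱ (k-1)] =ᵐ[P]
        fun ω => (P[P[S|ℱ k]|ℱ (k-1)]) ω - (P[P[S|ℱ (k-1)]|ℱ (k-1)]) ω :=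
      condExp_sub integrable_condExp integrable_condExp _
    have htow : P[P[S|ℱ k]|ℱ (k-1)] =ᵐ[P] P[S|ℱ (k-1)] :=
      condExp_condExp_of_le (hmono (by omega)) (hle k)
    have hself : P[P[S|ℱ (k-1)]|ℱ (k-1)] = P[S|ℱ (k-1)] :=
      condExp_of_stronglyMeasurable (hle (k-1)) stronglyMeasurable_condExp integrable_condExp
    filter_upwards [hsub, htow] with ω h1 h2
    rw [h1, h2, hself]
    simp
  -- pointwise control of the projections by the a k
  have hDle : ∀ k, k ≤ N → eLpNorm (D k) p P ≤ a k := by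
    intro k hk
    have hzero : ∀ t ∈ Finset.Icc (1:ℤ) N, t ∉ Finset.Icc (max k 1) N →
        (fun ω => (P[Z t|ℱ k]) ω - (P[Z t|ℱ (k - 1)]) ω) = fun _ => (0:ℝ) := by
      intro t ht hnt
      rw [Finset.mem_Icc] at ht
      rw [Finset.mem_Icc, not_and] at hnt
      have htk : t ≤ k - 1 := by
        by_contra hcon
        push_neg at hcon
        have h1 : max k 1 ≤ t := max_le (by omega) ht.1
        exact absurd (hnt h1) (by omega)
      have hZSMk : StronglyMeasurable[ℱ k] (Z t) := (hadapt t ht.1 ht.2).mono (hmono (by omega))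
      have hZSMk1 : StronglyMeasurable[ℱ (k-1)] (Z t) :=
        (hadapt t ht.1 ht.2).mono (hmono (by omega))
      have e1 : P[Z t|ℱ k] = Z t :=
        condExp_of_stronglyMeasurable (hle k) hZSMk (hZint t ht.1 ht.2)
      have e2 : P[Z t|ℱ (k-1)] = Z t :=
        condExp_of_stronglyMeasurable (hle (k-1)) hZSMk1 (hZint t ht.1 ht.2)
      funext ω
      rw [e1, e2, sub_self]
    have hsubset : Finset.Icc (max k 1) N ⊆ Finset.Icc (1:ℤ) N := by
      intro t ht
      rw [Finset.mem_Icc] at ht ⊢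
      constructor
      · calc (1:ℤ) ≤ max k 1 := le_max_right _ _
        _ ≤ t := ht.1
      · exact ht.2
    have hDeq : D k =ᵐ[P] fun ω => ∑ t ∈ Finset.Icc (max k 1) N,
        ((P[Z t|ℱ k]) ω - (P[Z t|ℱ (k - 1)]) ω) := by
      filter_upwards [hcond k, hcond (k-1)] with ω e1 e2
      rw [hDdef]
      simp only
      rw [e1, e2, Finset.sum_apply, Finset.sum_apply, ← Finset.sum_sub_distrib]
      refine (Finset.sum_subset hsubset ?_).symm
      intro t ht hnt
      have := hzero t ht hnt
      exact congrFun this ω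
    rw [eLpNorm_congr_ae hDeq]
    have hsum : (fun ω => ∑ t ∈ Finset.Icc (max k 1) N,
        ((P[Z t|ℱ k]) ω - (P[Z t|ℱ (k - 1)]) ω)) = ∑ t ∈ Finset.Icc (max k 1) N,
        (fun ω => (P[Z t|ℱ k]) ω - (P[Z t|ℱ (k - 1)]) ω) := by
      funext ω; rw [Finset.sum_apply]
    rw [hsum, hadef]
    refine eLpNorm_sum_le (fun t ht => ?_) hp1
    exact ((stronglyMeasurable_condExp.mono (hle k)).aestronglyMeasurable.sub
      ((stronglyMeasurable_condExp.mono (hle (k-1))).aestronglyMeasurable))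
  have hDmem : ∀ k, k ≤ N → MemLp (D k) p P := by
    intro k hk
    constructor
    · exact ((stronglyMeasurable_condExp.mono (hle k)).aestronglyMeasurable.sub
        ((stronglyMeasurable_condExp.mono (hle (k-1))).aestronglyMeasurable))
    · exact lt_of_le_of_lt (hDle k hk) (haT k hk)
  -- telescoping identity
  have hSn : P[S|ℱ N] = S := condExp_of_stronglyMeasurable (hle N) hSM hSint
  have htel : ∀ m : ℤ, m ≤ N → ∀ ω, ∑ k ∈ Finset.Icc (m+1) N, D k ω
      = S ω - (P[S|ℱ m]) ω := by
    intro m hm ω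
    have := telescope_sum (fun k => (P[S|ℱ k]) ω) m N hm
    rw [hDdef]
    simp only at this ⊢
    rw [this, hSn]
  -- the main estimate for each m
  have E2 : ∀ m : ℤ, m ≤ N →
      (eLpNorm (fun ω => S ω - (P[S|ℱ m]) ω) p P) ^ r ≤ 2 * T := by
    intro m hm
    have heq : (fun ω => S ω - (P[S|ℱ m]) ω)
        = fun ω => ∑ k ∈ Finset.Icc (m+1) N, D k ω := by
      funext ω
      rw [htel m hm ω]
    rw [heq, hel]
    have hmain := vbe_finite P hr1 hr2 ℱ hmono hle D m N hm
      (fun k h1 h2 => hDSM k) (fun k h1 h2 => hDmem k h2) (fun k h1 h2 => hD0 k)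
    refine hmain.trans ?_
    have hstep1 : ∑ k ∈ Finset.Icc (m+1) N, ∫⁻ ω, (‖D k ω‖₊ : ℝ≥0∞) ^ r ∂P
        ≤ ∑ k ∈ Finset.Icc (m+1) N, (a k) ^ r := by
      refine Finset.sum_le_sum fun k hk => ?_
      rw [Finset.mem_Icc] at hk
      rw [← hel (D k)]
      exact ENNReal.rpow_le_rpow (hDle k hk.2) hr0.le
    have hstep2 : ∑ k ∈ Finset.Icc (m+1) N, (a k) ^ r ≤ T := by
      have hind : ∀ k ∈ Finset.Icc (m+1) N,
          (a k) ^ r = Set.indicator {k : ℤ | k ≤ N} (fun k => (a k) ^ r) k := by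
        intro k hk
        rw [Finset.mem_Icc] at hk
        rw [Set.indicator_of_mem (by exact hk.2 : k ∈ {k : ℤ | k ≤ N})]
      rw [Finset.sum_congr rfl hind]
      refine le_trans (ENNReal.sum_le_tsum _) ?_
      rw [hTdef]
      rw [← tsum_subtype {k : ℤ | k ≤ N} (fun k => (a k) ^ r)]
      rfl
    calc 2 * ∑ k ∈ Finset.Icc (m+1) N, ∫⁻ ω, (‖D k ω‖₊ : ℝ≥0∞) ^ r ∂P
        ≤ 2 * ∑ k ∈ Finset.Icc (m+1) N, (a k) ^ r := by
          exact mul_le_mul_right hstep1 2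
    _ ≤ 2 * T := mul_le_mul_right hstep2 2
  -- vanishing of the conditional expectations at -∞
  have hε : Tendsto (fun m : ℤ => eLpNorm (P[S|ℱ m]) p P) atBot (nhds 0) := by
    have hbound : ∀ m : ℤ, eLpNorm (P[S|ℱ m]) p P
        ≤ ∑ t ∈ Finset.Icc (1:ℤ) N, eLpNorm (P[Z t|ℱ m]) p P := by
      intro m
      rw [eLpNorm_congr_ae (hcond m)]
      refine eLpNorm_sum_le (fun t ht => ?_) hp1
      exact (stronglyMeasurable_condExp.mono (hle m)).aestronglyMeasurable
    have hδ : Tendsto (fun m : ℤ => ∑ t ∈ Finset.Icc (1:ℤ) N,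
        eLpNorm (P[Z t|ℱ m]) p P) atBot (nhds 0) := by
      have := tendsto_finset_sum (Finset.Icc (1:ℤ) N)
        (fun t ht => by
          rw [Finset.mem_Icc] at ht
          exact hLrconv t ht.1 ht.2)
      simpa using this
    exact tendsto_of_tendsto_of_tendsto_of_le_of_le tendsto_const_nhds hδ
      (fun m => by simp) hbound
  -- conclude
  have hSbound : eLpNorm S p P ≤ (2 * T) ^ (1/r) := by
    have hev : ∀ᶠ m in (atBot : Filter ℤ), eLpNorm S p P
        ≤ (2 * T) ^ (1/r) + eLpNorm (P[S|ℱ m]) p P := by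
      filter_upwards [eventually_le_atBot N] with m hm
      have hdecomp : eLpNorm S p P ≤ eLpNorm (fun ω => S ω - (P[S|ℱ m]) ω) p P
          + eLpNorm (P[S|ℱ m]) p P := by
        have hrw : S = fun ω => (S ω - (P[S|ℱ m]) ω) + (P[S|ℱ m]) ω := by
          funext ω; ring
        nth_rewrite 1 [hrw]
        refine eLpNorm_add_le ?_ ?_ hp1
        · exact (hSmem.aestronglyMeasurable.sub
            (stronglyMeasurable_condExp.mono (hle m)).aestronglyMeasurable)
        · exact (stronglyMeasurable_condExp.mono (hle m)).aestronglyMeasurable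
      refine hdecomp.trans (add_le_add_left ?_ _)
      have h1 : eLpNorm (fun ω => S ω - (P[S|ℱ m]) ω) p P
          = ((eLpNorm (fun ω => S ω - (P[S|ℱ m]) ω) p P) ^ r) ^ (1/r) := by
        rw [← ENNReal.rpow_mul, mul_one_div, div_self (ne_of_gt hr0), ENNReal.rpow_one]
      rw [h1]
      exact ENNReal.rpow_le_rpow (E2 m hm) (by positivity)
    have hlim : Tendsto (fun m : ℤ => (2 * T) ^ (1/r) + eLpNorm (P[S|ℱ m]) p P)
        atBot (nhds ((2 * T) ^ (1/r))) := by
      have := Tendsto.const_add ((2 * T) ^ (1/r)) hε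
      simpa using this
    exact ge_of_tendsto hlim hev
  calc ∫⁻ ω, (‖S ω‖₊ : ℝ≥0∞) ^ r ∂P = (eLpNorm S p P) ^ r := (hel S).symm
  _ ≤ ((2 * T) ^ (1/r)) ^ r := ENNReal.rpow_le_rpow hSbound hr0.le
  _ = 2 * T := by
      rw [← ENNReal.rpow_mul, one_div, inv_mul_cancel₀ (ne_of_gt hr0), ENNReal.rpow_one]
end

section
/- Let d ∈ (0,1), γ ∈ (0, d/(1−d)) and r > 1/(1−d). Then there exists a constant C > 0, depending only on γ, d and r, such that for all integers n ≥ 1, ∑_{k∈ℤ, k≤n} ( ∑_{t=max(k,1)}^n c_{t−k} )^r ≤ C · n^{r+1−(1−d)(1+γ)r}, where c_0 := 1 and c_j := j^{−(1−d)(1+γ)} for integers j ≥ 1. -/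
open scoped ENNReal

section helpers
open Finset

private lemma bern_low {a x : ℝ} (ha0 : 0 < a) (ha1 : a < 1) (hx : 0 ≤ x) :
    (1 - a) * (x + 1) ^ (-a) ≤ (x + 1) ^ (1 - a) - x ^ (1 - a) := by
  set y := x + 1 with hy
  have hy1 : 1 ≤ y := by simp [hy]; linarith
  have hy0 : 0 < y := by linarith
  have hsle : 1 / y ≤ 1 := by rw [div_le_one hy0]; linarith
  have hs : -1 ≤ -(1 / y) := by linarith
  have h1 : (1 + -(1 / y)) ^ (1 - a) ≤ 1 + (1 - a) * -(1 / y) :=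
    rpow_one_add_le_one_add_mul_self hs (by linarith) (by linarith)
  have hnn : (0 : ℝ) ≤ 1 + -(1 / y) := by linarith
  have hxy : x = y * (1 + -(1 / y)) := by field_simp; linarith
  have e1 : x ^ (1 - a) = y ^ (1 - a) * (1 + -(1 / y)) ^ (1 - a) := by
    rw [hxy, Real.mul_rpow hy0.le hnn]
  have e2 : y ^ (1 - a) * (1 / y) = y ^ (-a) := by
    rw [show (-a : ℝ) = (1 - a) + -1 by ring, Real.rpow_add hy0, Real.rpow_neg_one, one_div]
  have h2 : x ^ (1 - a) ≤ y ^ (1 - a) - (1 - a) * y ^ (-a) := by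
    calc x ^ (1 - a) = y ^ (1 - a) * (1 + -(1 / y)) ^ (1 - a) := e1
      _ ≤ y ^ (1 - a) * (1 + (1 - a) * -(1 / y)) :=
          mul_le_mul_of_nonneg_left h1 (Real.rpow_nonneg hy0.le _)
      _ = y ^ (1 - a) - (1 - a) * (y ^ (1 - a) * (1 / y)) := by ring
      _ = y ^ (1 - a) - (1 - a) * y ^ (-a) := by rw [e2]
  linarith

private lemma sum_rpow_le {a : ℝ} (ha0 : 0 < a) (ha1 : a < 1) (N : ℕ) :
    ∑ j ∈ Finset.range N, ((j : ℝ) + 1) ^ (-a) ≤ (N : ℝ) ^ (1 - a) / (1 - a) := by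
  have hb : 0 < 1 - a := by linarith
  have key : ∀ j ∈ Finset.range N,
      ((j : ℝ) + 1) ^ (-a) ≤ (((j + 1 : ℕ) : ℝ) ^ (1 - a) - ((j : ℕ) : ℝ) ^ (1 - a)) / (1 - a) := by
    intro j _
    rw [le_div_iff₀ hb]
    have h := bern_low ha0 ha1 (by positivity : (0:ℝ) ≤ (j : ℝ))
    push_cast
    linarith
  calc ∑ j ∈ Finset.range N, ((j : ℝ) + 1) ^ (-a)
      ≤ ∑ j ∈ Finset.range N, ((((j + 1 : ℕ)) : ℝ) ^ (1 - a) - ((j : ℕ) : ℝ) ^ (1 - a)) / (1 - a) :=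
        Finset.sum_le_sum key
    _ = (∑ j ∈ Finset.range N, ((((j + 1 : ℕ)) : ℝ) ^ (1 - a) - ((j : ℕ) : ℝ) ^ (1 - a))) / (1 - a) := by
        rw [Finset.sum_div]
    _ = ((N : ℝ) ^ (1 - a) - ((0 : ℕ) : ℝ) ^ (1 - a)) / (1 - a) := by
        rw [Finset.sum_range_sub (fun j : ℕ => ((j : ℕ) : ℝ) ^ (1 - a))]
    _ ≤ (N : ℝ) ^ (1 - a) / (1 - a) := by
        rw [Nat.cast_zero, Real.zero_rpow (by linarith : (1 : ℝ) - a ≠ 0), sub_zero]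

private lemma bern_high {p x : ℝ} (hp : 1 < p) (hx : 1 ≤ x) :
    (p - 1) * (x + 1) ^ (-p) ≤ x ^ (1 - p) - (x + 1) ^ (1 - p) := by
  have hx0 : 0 < x := by linarith
  have hy0 : (0 : ℝ) < x + 1 := by linarith
  have hs0 : (0:ℝ) ≤ 1 / x := by positivity
  have h1 : 1 + p * (1 / x) ≤ (1 + 1 / x) ^ p :=
    one_add_mul_self_le_rpow_one_add (by linarith) hp.le
  have e1 : (x + 1) ^ p = x ^ p * (1 + 1 / x) ^ p := by
    rw [← Real.mul_rpow hx0.le (by positivity)]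
    congr 1; field_simp
  have e2 : x ^ (1 - p) * x ^ p = x := by
    rw [← Real.rpow_add hx0, sub_add_cancel, Real.rpow_one]
  have key : x + p ≤ x ^ (1 - p) * (x + 1) ^ p := by
    calc x + p = x * (1 + p * (1 / x)) := by field_simp
      _ ≤ x * (1 + 1 / x) ^ p := mul_le_mul_of_nonneg_left h1 hx0.le
      _ = x ^ (1 - p) * x ^ p * (1 + 1 / x) ^ p := by rw [e2]
      _ = x ^ (1 - p) * (x + 1) ^ p := by rw [e1, mul_assoc]
  have e3 : (x + 1) ^ (1 - p) = (x + 1) * (x + 1) ^ (-p) := by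
    rw [show (1 - p : ℝ) = 1 + -p by ring, Real.rpow_add hy0, Real.rpow_one]
  have e4 : x ^ (1 - p) = x ^ (1 - p) * (x + 1) ^ p * (x + 1) ^ (-p) := by
    rw [mul_assoc, ← Real.rpow_add hy0, add_neg_cancel, Real.rpow_zero, mul_one]
  calc (p - 1) * (x + 1) ^ (-p)
      ≤ (x ^ (1 - p) * (x + 1) ^ p - (x + 1)) * (x + 1) ^ (-p) := by
        apply mul_le_mul_of_nonneg_right _ (Real.rpow_nonneg hy0.le _)
        linarith
    _ = x ^ (1 - p) - (x + 1) ^ (1 - p) := by rw [sub_mul, ← e4, ← e3]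

private lemma tail_sum_le {p : ℝ} (hp : 1 < p) (M : ℕ) (hM : 1 ≤ M) (s : Finset ℕ) :
    ∑ i ∈ s, ((i : ℝ) + M + 1) ^ (-p) ≤ (M : ℝ) ^ (1 - p) / (p - 1) := by
  obtain ⟨N, hN⟩ := Finset.exists_nat_subset_range s
  have hp1 : (0 : ℝ) < p - 1 := by linarith
  have hM1 : (1 : ℝ) ≤ (M : ℝ) := by exact_mod_cast hM
  have key : ∀ i ∈ Finset.range N,
      ((i : ℝ) + M + 1) ^ (-p) ≤ (((i + M : ℕ) : ℝ) ^ (1 - p) - ((i + 1 + M : ℕ) : ℝ) ^ (1 - p)) / (p - 1) := by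
    intro i _
    rw [le_div_iff₀ hp1]
    have hx : (1 : ℝ) ≤ (i : ℝ) + M := by
      have : (0 : ℝ) ≤ (i : ℝ) := Nat.cast_nonneg i
      linarith
    have h := bern_high hp hx
    push_cast
    have e : (i : ℝ) + 1 + M = (i : ℝ) + M + 1 := by ring
    rw [e]
    nlinarith [h]
  calc ∑ i ∈ s, ((i : ℝ) + M + 1) ^ (-p)
      ≤ ∑ i ∈ Finset.range N, ((i : ℝ) + M + 1) ^ (-p) := by
        apply Finset.sum_le_sum_of_subset_of_nonneg hN
        intro i _ _
        exact Real.rpow_nonneg (by positivity) _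
    _ ≤ ∑ i ∈ Finset.range N, (((i + M : ℕ) : ℝ) ^ (1 - p) - ((i + 1 + M : ℕ) : ℝ) ^ (1 - p)) / (p - 1) :=
        Finset.sum_le_sum key
    _ = (∑ i ∈ Finset.range N, (((i + M : ℕ) : ℝ) ^ (1 - p) - (((i + 1) + M : ℕ) : ℝ) ^ (1 - p))) / (p - 1) := by
        rw [Finset.sum_div]
    _ = (((0 + M : ℕ) : ℝ) ^ (1 - p) - ((N + M : ℕ) : ℝ) ^ (1 - p)) / (p - 1) := by
        rw [Finset.sum_range_sub' (fun i : ℕ => ((i + M : ℕ) : ℝ) ^ (1 - p))]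
    _ ≤ (M : ℝ) ^ (1 - p) / (p - 1) := by
        simp only [Nat.zero_add]
        have hB : (0:ℝ) ≤ ((N + M : ℕ) : ℝ) ^ (1 - p) := Real.rpow_nonneg (Nat.cast_nonneg _) _
        gcongr
        linarith

end helpers

private lemma sum_Icc_int_eq (f : ℤ → ℝ) (b : ℕ) :
    ∑ j ∈ Finset.Icc (0:ℤ) (b:ℤ), f j = ∑ j ∈ Finset.range (b+1), f (j:ℤ) := by
  refine Finset.sum_nbij' (fun z : ℤ => z.toNat) (fun m : ℕ => (m:ℤ)) ?_ ?_ ?_ ?_ ?_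
  · intro x hx
    simp only [Finset.mem_Icc] at hx
    show x.toNat ∈ Finset.range (b+1)
    simp only [Finset.mem_range]
    omega
  · intro m hm
    simp only [Finset.mem_range] at hm
    show (m:ℤ) ∈ Finset.Icc (0:ℤ) (b:ℤ)
    simp only [Finset.mem_Icc]
    omega
  · intro x hx
    simp only [Finset.mem_Icc] at hx
    show ((x.toNat : ℕ) : ℤ) = x
    omega
  · intro m _
    show ((m:ℤ)).toNat = m
    omega
  · intro x hx
    simp only [Finset.mem_Icc] at hx
    show f x = f ((x.toNat : ℕ) : ℤ)
    congr 1
    omega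

/-- Analytic convolution-sum lemma (Lemma C.4 of the paper): for `d ∈ (0,1)`,
`0 < γ < d/(1-d)` and `r > 1/(1-d)`, with `c_0 = 1` and `c_j = j^{-(1-d)(1+γ)}` for `j ≥ 1`,
one has `∑_{k ≤ n} (∑_{t=max(k,1)}^n c_{t-k})^r ≤ C n^{r+1-(1-d)(1+γ)r}`. -/
theorem convolution_sum_bound (d γ r : ℝ) (hd0 : 0 < d) (hd1 : d < 1)
    (hγ0 : 0 < γ) (hγ : γ < d / (1 - d)) (hr : 1 / (1 - d) < r) :
    ∃ C > 0, ∀ n : ℕ, 1 ≤ n →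
      (∑' k : {k : ℤ // k ≤ (n : ℤ)},
        ENNReal.ofReal ((∑ t ∈ Finset.Icc (max k.1 1) (n : ℤ),
          (if t = k.1 then (1 : ℝ)
            else ((t - k.1 : ℤ) : ℝ) ^ (-(1 - d) * (1 + γ)))) ^ r))
        ≤ ENNReal.ofReal (C * (n : ℝ) ^ (r + 1 - (1 - d) * (1 + γ) * r)) := by
  have h1d : 0 < 1 - d := by linarith
  set a : ℝ := (1 - d) * (1 + γ) with ha_def
  have ha0 : 0 < a := mul_pos h1d (by linarith)
  have hγd : γ * (1 - d) < d := (lt_div_iff₀ h1d).mp hγ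
  have ha1 : a < 1 := by rw [ha_def]; nlinarith
  have hb : 0 < 1 - a := by linarith
  have hrd : 1 < r * (1 - d) := (div_lt_iff₀ h1d).mp hr
  have hr1 : 1 < r := by nlinarith
  have hr0 : 0 < r := by linarith
  have har : 1 < a * r := by rw [ha_def]; nlinarith
  have har1 : 0 < a * r - 1 := by linarith
  set K : ℝ := 1 + 3 / (1 - a) with hK_def
  have hK1 : 1 ≤ K := by
    rw [hK_def]
    have : 0 ≤ 3 / (1 - a) := by positivity
    linarith
  have hK0 : 0 < K := by linarith
  refine ⟨4 * K ^ r + 1 / (a * r - 1),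
    add_pos (mul_pos (by norm_num) (Real.rpow_pos_of_pos hK0 r)) (div_pos one_pos har1), ?_⟩
  intro n hn
  have hn0 : (0:ℝ) < n := by exact_mod_cast Nat.cast_pos.mpr hn
  have hn1 : (1:ℝ) ≤ n := by exact_mod_cast hn
  set F : ℤ → ℝ := fun j => if j = 0 then (1:ℝ) else (j:ℝ) ^ (-a) with hF_def
  have hFnonneg : ∀ j : ℤ, 0 ≤ j → 0 ≤ F j := by
    intro j hj
    simp only [hF_def]
    split
    · norm_num
    · exact Real.rpow_nonneg (by exact_mod_cast hj) _
  have hFeq : ∀ k : ℤ,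
      (∑ t ∈ Finset.Icc (max k 1) (n:ℤ),
        (if t = k then (1:ℝ) else ((t - k : ℤ) : ℝ) ^ (-(1 - d) * (1 + γ))))
        = ∑ j ∈ Finset.Icc (max k 1 - k) ((n:ℤ) - k), F j := by
    intro k
    rw [show max k 1 - k = max k 1 + (-k) by ring, show (n:ℤ) - k = (n:ℤ) + (-k) by ring,
      ← Finset.map_add_right_Icc, Finset.sum_map]
    apply Finset.sum_congr rfl
    intro t _
    have hemb : ((addRightEmbedding (-k)) t) = t + -k := rfl
    rw [hemb]
    simp only [hF_def]
    by_cases h : t = k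
    · simp [h]
    · rw [if_neg h, if_neg (show ¬(t + -k = 0) by omega)]
      have hbase : ((t - k : ℤ) : ℝ) = ((t + -k : ℤ) : ℝ) := by push_cast; ring
      have hexp : -(1 - d) * (1 + γ) = -a := by rw [ha_def]; ring
      rw [hbase, hexp]
  set g : ℕ → ℝ≥0∞ := fun m =>
    ENNReal.ofReal ((∑ j ∈ Finset.Icc (max ((n:ℤ) - m) 1 - ((n:ℤ) - m)) (m:ℤ), F j) ^ r)
    with hg_def
  have hSnn : ∀ m : ℕ,
      0 ≤ ∑ j ∈ Finset.Icc (max ((n:ℤ) - m) 1 - ((n:ℤ) - m)) (m:ℤ), F j := by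
    intro m
    apply Finset.sum_nonneg
    intro j hj
    have hj' := (Finset.mem_Icc.mp hj).1
    have h0 : (0:ℤ) ≤ max ((n:ℤ) - m) 1 - ((n:ℤ) - m) := sub_nonneg.mpr (le_max_left _ _)
    exact hFnonneg j (le_trans h0 hj')
  -- reindex the tsum
  let e : ℕ ≃ {k : ℤ // k ≤ (n:ℤ)} :=
    { toFun := fun m => ⟨(n:ℤ) - m, by omega⟩
      invFun := fun k => ((n:ℤ) - k.1).toNat
      left_inv := fun m => by simp only []; omega
      right_inv := fun k => Subtype.ext (by have := k.2; simp only []; omega) }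
  have key : ∀ m : ℕ,
      ENNReal.ofReal ((∑ t ∈ Finset.Icc (max ((n:ℤ) - m) 1) (n:ℤ),
          (if t = (n:ℤ) - m then (1:ℝ)
            else ((t - ((n:ℤ) - m) : ℤ) : ℝ) ^ (-(1 - d) * (1 + γ)))) ^ r) = g m := by
    intro m
    rw [hg_def]
    simp only []
    rw [hFeq ((n:ℤ) - m), sub_sub_cancel]
  have hmain : (∑' k : {k : ℤ // k ≤ (n : ℤ)},
        ENNReal.ofReal ((∑ t ∈ Finset.Icc (max k.1 1) (n : ℤ),
          (if t = k.1 then (1 : ℝ)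
            else ((t - k.1 : ℤ) : ℝ) ^ (-(1 - d) * (1 + γ)))) ^ r)) = ∑' m : ℕ, g m := by
    rw [← Equiv.tsum_eq e]
    exact tsum_congr fun m => key m
  rw [hmain, ← Summable.sum_add_tsum_nat_add' (f := g) (k := 3*n+1) ENNReal.summable]
  -- Part A : small shifts
  have hSA : ∀ m : ℕ, m ≤ 3*n →
      (∑ j ∈ Finset.Icc (max ((n:ℤ) - m) 1 - ((n:ℤ) - m)) (m:ℤ), F j) ≤ K * (n:ℝ) ^ (1-a) := by
    intro m hm
    have hsub : Finset.Icc (max ((n:ℤ) - m) 1 - ((n:ℤ) - m)) (m:ℤ)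
        ⊆ Finset.Icc (0:ℤ) ((3*n:ℕ):ℤ) := by
      apply Finset.Icc_subset_Icc (sub_nonneg.mpr (le_max_left _ _))
      exact_mod_cast hm
    have hstep1 : (∑ j ∈ Finset.Icc (max ((n:ℤ) - m) 1 - ((n:ℤ) - m)) (m:ℤ), F j)
        ≤ ∑ j ∈ Finset.Icc (0:ℤ) ((3*n:ℕ):ℤ), F j := by
      apply Finset.sum_le_sum_of_subset_of_nonneg hsub
      intro j hj _
      exact hFnonneg j (Finset.mem_Icc.mp hj).1
    have hstep2 : ∑ j ∈ Finset.Icc (0:ℤ) ((3*n:ℕ):ℤ), F j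
        = (∑ j ∈ Finset.range (3*n), F ((j+1:ℕ):ℤ)) + F ((0:ℕ):ℤ) := by
      rw [sum_Icc_int_eq F (3*n), Finset.sum_range_succ' (fun j : ℕ => F (j:ℤ))]
    have hF0 : F ((0:ℕ):ℤ) = 1 := by simp [hF_def]
    have hstep3 : (∑ j ∈ Finset.range (3*n), F ((j+1:ℕ):ℤ))
        ≤ (3*(n:ℝ)) ^ (1-a) / (1-a) := by
      have hc : ∀ j ∈ Finset.range (3*n), F ((j+1:ℕ):ℤ) = ((j:ℝ)+1) ^ (-a) := by
        intro j _
        simp only [hF_def]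
        rw [if_neg (by omega)]
        norm_num
      rw [Finset.sum_congr rfl hc]
      have h1 := sum_rpow_le ha0 ha1 (3*n)
      calc ∑ j ∈ Finset.range (3*n), ((j:ℝ)+1) ^ (-a)
          ≤ ((3*n:ℕ):ℝ) ^ (1-a) / (1-a) := h1
        _ = (3*(n:ℝ)) ^ (1-a) / (1-a) := by push_cast; ring_nf
    have h2 : (3*(n:ℝ)) ^ (1-a) ≤ 3 * (n:ℝ) ^ (1-a) := by
      rw [Real.mul_rpow (by norm_num) hn0.le]
      apply mul_le_mul_of_nonneg_right ?_ (Real.rpow_nonneg hn0.le _)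
      calc (3:ℝ) ^ (1-a) ≤ (3:ℝ) ^ (1:ℝ) :=
            Real.rpow_le_rpow_of_exponent_le (by norm_num) (by linarith)
        _ = 3 := Real.rpow_one 3
    have h3 : (1:ℝ) ≤ (n:ℝ) ^ (1-a) := by
      calc (1:ℝ) = (1:ℝ) ^ (1-a) := (Real.one_rpow _).symm
        _ ≤ (n:ℝ) ^ (1-a) := Real.rpow_le_rpow (by norm_num) hn1 hb.le
    have h4 : (3*(n:ℝ)) ^ (1-a) / (1-a) ≤ (3/(1-a)) * (n:ℝ) ^ (1-a) := by
      rw [show (3/(1-a)) * (n:ℝ) ^ (1-a) = 3 * (n:ℝ) ^ (1-a) / (1-a) by ring]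
      gcongr
    have hKexp : K * (n:ℝ) ^ (1-a) = (n:ℝ) ^ (1-a) + (3/(1-a)) * (n:ℝ) ^ (1-a) := by
      rw [hK_def]; ring
    have hsum : (∑ j ∈ Finset.Icc (max ((n:ℤ) - m) 1 - ((n:ℤ) - m)) (m:ℤ), F j)
        ≤ (3*(n:ℝ)) ^ (1-a) / (1-a) + 1 := by
      rw [hstep2, hF0] at hstep1
      linarith [hstep3]
    calc (∑ j ∈ Finset.Icc (max ((n:ℤ) - m) 1 - ((n:ℤ) - m)) (m:ℤ), F j)
        ≤ (3*(n:ℝ)) ^ (1-a) / (1-a) + 1 := hsum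
      _ ≤ (3/(1-a)) * (n:ℝ) ^ (1-a) + (n:ℝ) ^ (1-a) := add_le_add h4 h3
      _ = K * (n:ℝ) ^ (1-a) := by rw [hK_def]; ring
  have hA : ∑ m ∈ Finset.range (3*n+1), g m
      ≤ ENNReal.ofReal (4 * K ^ r * (n:ℝ) ^ ((1-a)*r+1)) := by
    have hptw : ∀ m ∈ Finset.range (3*n+1), g m ≤ ENNReal.ofReal ((K * (n:ℝ) ^ (1-a)) ^ r) := by
      intro m hm
      rw [hg_def]
      apply ENNReal.ofReal_le_ofReal
      exact Real.rpow_le_rpow (hSnn m) (hSA m (by have := Finset.mem_range.mp hm; omega)) hr0.le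
    calc ∑ m ∈ Finset.range (3*n+1), g m
        ≤ (3*n+1) • ENNReal.ofReal ((K * (n:ℝ) ^ (1-a)) ^ r) := by
          have := Finset.sum_le_card_nsmul (Finset.range (3*n+1)) g _ hptw
          simpa [Finset.card_range] using this
      _ = ENNReal.ofReal (((3*n+1:ℕ):ℝ) * (K * (n:ℝ) ^ (1-a)) ^ r) := by
          rw [nsmul_eq_mul, ← ENNReal.ofReal_natCast (3*n+1),
            ← ENNReal.ofReal_mul (Nat.cast_nonneg _)]
      _ ≤ ENNReal.ofReal (4 * K ^ r * (n:ℝ) ^ ((1-a)*r+1)) := by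
          apply ENNReal.ofReal_le_ofReal
          have e6 : (K * (n:ℝ) ^ (1-a)) ^ r = K ^ r * (n:ℝ) ^ ((1-a)*r) := by
            rw [Real.mul_rpow hK0.le (Real.rpow_nonneg hn0.le _), ← Real.rpow_mul hn0.le]
          have h7 : ((3*n+1:ℕ):ℝ) ≤ 4*(n:ℝ) := by push_cast; linarith
          have e8 : (n:ℝ) ^ ((1-a)*r+1) = (n:ℝ) ^ ((1-a)*r) * (n:ℝ) := by
            rw [Real.rpow_add hn0, Real.rpow_one]
          calc ((3*n+1:ℕ):ℝ) * (K * (n:ℝ) ^ (1-a)) ^ r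
              = ((3*n+1:ℕ):ℝ) * (K ^ r * (n:ℝ) ^ ((1-a)*r)) := by rw [e6]
            _ ≤ 4*(n:ℝ) * (K ^ r * (n:ℝ) ^ ((1-a)*r)) := by
                apply mul_le_mul_of_nonneg_right h7
                positivity
            _ = 4 * K ^ r * (n:ℝ) ^ ((1-a)*r+1) := by rw [e8]; ring
  -- Part B : far shifts
  have hB : (∑' i : ℕ, g (i + (3*n+1)))
      ≤ ENNReal.ofReal ((n:ℝ) ^ r * (((2*n:ℕ):ℝ) ^ (1-a*r) / (a*r-1))) := by
    have hptw : ∀ i : ℕ, g (i + (3*n+1))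
        ≤ ENNReal.ofReal ((n:ℝ) ^ r * ((i:ℝ) + ((2*n:ℕ):ℝ) + 1) ^ (-(a*r))) := by
      intro i
      rw [hg_def]
      apply ENNReal.ofReal_le_ofReal
      have hx0 : (0:ℝ) < (i:ℝ) + ((2*n:ℕ):ℝ) + 1 := by positivity
      have hmax : max ((n:ℤ) - (i + (3*n+1) : ℕ)) 1 = 1 := by
        apply max_eq_right
        push_cast
        omega
      have hS : (∑ j ∈ Finset.Icc (max ((n:ℤ) - (i + (3*n+1) : ℕ)) 1
            - ((n:ℤ) - (i + (3*n+1) : ℕ))) ((i + (3*n+1) : ℕ):ℤ), F j)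
          ≤ (n:ℝ) * ((i:ℝ) + ((2*n:ℕ):ℝ) + 1) ^ (-a) := by
        have hcard : (Finset.Icc (max ((n:ℤ) - (i + (3*n+1) : ℕ)) 1
            - ((n:ℤ) - (i + (3*n+1) : ℕ))) ((i + (3*n+1) : ℕ):ℤ)).card = n := by
          rw [hmax, Int.card_Icc]
          push_cast
          omega
        have hterm : ∀ j ∈ Finset.Icc (max ((n:ℤ) - (i + (3*n+1) : ℕ)) 1
            - ((n:ℤ) - (i + (3*n+1) : ℕ))) ((i + (3*n+1) : ℕ):ℤ),
            F j ≤ ((i:ℝ) + ((2*n:ℕ):ℝ) + 1) ^ (-a) := by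
          intro j hj
          have hj' := (Finset.mem_Icc.mp hj).1
          rw [hmax] at hj'
          have hjge : ((i:ℕ):ℤ) + 2*(n:ℤ) + 2 ≤ j := by push_cast at hj' ⊢; omega
          simp only [hF_def]
          rw [if_neg (by omega)]
          apply Real.rpow_le_rpow_of_nonpos hx0 ?_ (by linarith : -a ≤ 0)
          have : ((i:ℕ):ℝ) + 2*(n:ℝ) + 2 ≤ (j:ℝ) := by exact_mod_cast hjge
          push_cast
          linarith
        calc (∑ j ∈ Finset.Icc (max ((n:ℤ) - (i + (3*n+1) : ℕ)) 1
              - ((n:ℤ) - (i + (3*n+1) : ℕ))) ((i + (3*n+1) : ℕ):ℤ), F j)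
            ≤ (Finset.Icc (max ((n:ℤ) - (i + (3*n+1) : ℕ)) 1
              - ((n:ℤ) - (i + (3*n+1) : ℕ))) ((i + (3*n+1) : ℕ):ℤ)).card
                • (((i:ℝ) + ((2*n:ℕ):ℝ) + 1) ^ (-a)) :=
              Finset.sum_le_card_nsmul _ _ _ hterm
          _ = (n:ℝ) * ((i:ℝ) + ((2*n:ℕ):ℝ) + 1) ^ (-a) := by
              rw [hcard, nsmul_eq_mul]
      calc (∑ j ∈ Finset.Icc (max ((n:ℤ) - (i + (3*n+1) : ℕ)) 1
            - ((n:ℤ) - (i + (3*n+1) : ℕ))) ((i + (3*n+1) : ℕ):ℤ), F j) ^ r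
          ≤ ((n:ℝ) * ((i:ℝ) + ((2*n:ℕ):ℝ) + 1) ^ (-a)) ^ r :=
            Real.rpow_le_rpow (hSnn _) hS hr0.le
        _ = (n:ℝ) ^ r * ((i:ℝ) + ((2*n:ℕ):ℝ) + 1) ^ (-(a*r)) := by
            rw [Real.mul_rpow hn0.le (Real.rpow_nonneg hx0.le _),
              ← Real.rpow_mul hx0.le, neg_mul]
    calc (∑' i : ℕ, g (i + (3*n+1)))
        ≤ ∑' i : ℕ, ENNReal.ofReal ((n:ℝ) ^ r * ((i:ℝ) + ((2*n:ℕ):ℝ) + 1) ^ (-(a*r))) :=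
          ENNReal.tsum_le_tsum hptw
      _ ≤ ENNReal.ofReal ((n:ℝ) ^ r * (((2*n:ℕ):ℝ) ^ (1-a*r) / (a*r-1))) := by
          rw [ENNReal.tsum_eq_iSup_sum]
          apply iSup_le
          intro s
          rw [← ENNReal.ofReal_sum_of_nonneg (by intro i _; positivity)]
          apply ENNReal.ofReal_le_ofReal
          rw [← Finset.mul_sum]
          apply mul_le_mul_of_nonneg_left ?_ (Real.rpow_nonneg hn0.le _)
          exact tail_sum_le har (2*n) (by omega) s
  -- combine
  calc (∑ m ∈ Finset.range (3*n+1), g m) + ∑' i : ℕ, g (i + (3*n+1))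
      ≤ ENNReal.ofReal (4 * K ^ r * (n:ℝ) ^ ((1-a)*r+1))
        + ENNReal.ofReal ((n:ℝ) ^ r * (((2*n:ℕ):ℝ) ^ (1-a*r) / (a*r-1))) := add_le_add hA hB
    _ = ENNReal.ofReal (4 * K ^ r * (n:ℝ) ^ ((1-a)*r+1)
        + (n:ℝ) ^ r * (((2*n:ℕ):ℝ) ^ (1-a*r) / (a*r-1))) :=
        (ENNReal.ofReal_add (by positivity) (by positivity)).symm
    _ ≤ ENNReal.ofReal ((4 * K ^ r + 1 / (a * r - 1)) * (n:ℝ) ^ (r + 1 - a * r)) := by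
        apply ENNReal.ofReal_le_ofReal
        have e9 : (n:ℝ) ^ ((1-a)*r+1) = (n:ℝ) ^ (r + 1 - a*r) := by
          rw [show (1-a)*r+1 = r + 1 - a*r by ring]
        have h10 : ((2*n:ℕ):ℝ) ^ (1-a*r) ≤ (n:ℝ) ^ (1-a*r) := by
          apply Real.rpow_le_rpow_of_nonpos hn0 ?_ (by linarith)
          push_cast; linarith
        have e11 : (n:ℝ) ^ r * ((n:ℝ) ^ (1-a*r) / (a*r-1))
            = (n:ℝ) ^ (r + 1 - a*r) * (1/(a*r-1)) := by
          rw [show r + 1 - a*r = r + (1-a*r) by ring, Real.rpow_add hn0]; ring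
        have h12 : (n:ℝ) ^ r * (((2*n:ℕ):ℝ) ^ (1-a*r) / (a*r-1))
            ≤ (n:ℝ) ^ (r + 1 - a*r) * (1/(a*r-1)) := by
          rw [← e11]
          apply mul_le_mul_of_nonneg_left ?_ (Real.rpow_nonneg hn0.le _)
          gcongr
        calc 4 * K ^ r * (n:ℝ) ^ ((1-a)*r+1)
              + (n:ℝ) ^ r * (((2*n:ℕ):ℝ) ^ (1-a*r) / (a*r-1))
            ≤ 4 * K ^ r * (n:ℝ) ^ (r + 1 - a*r) + (n:ℝ) ^ (r + 1 - a*r) * (1/(a*r-1)) := by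
              rw [e9]; linarith
          _ = (4 * K ^ r + 1 / (a * r - 1)) * (n:ℝ) ^ (r + 1 - a*r) := by ring
end

section
/- Let α ∈ (1,2] and d ∈ (0, 1−1/α). Define κ(γ,r) := 1 + 1/r − (1−d)(1+γ) on the compact domain D := {(γ,r) ∈ ℝ² : 1/(1−d) ≤ r ≤ α and 0 ≤ γ ≤ min(d/(1−d), 1 − 1/(r(1−d)), α/r − 1)}. Then κ attains its minimum over D at the unique point (γ₀, r₀), and the minimal value κ(γ₀, r₀) equals κ₀. -/
set_option maxHeartbeats 2000000 in
/-- Proposition C.5(i) of the paper: the function `κ(γ,r) = 1 + 1/r - (1-d)(1+γ)` attains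
its minimum over the compact domain
`D = {(γ,r) : 1/(1-d) ≤ r ≤ α, 0 ≤ γ ≤ min(d/(1-d), 1 - 1/(r(1-d)), α/r - 1)}`
at the unique point `(γ₀, r₀)`, with minimal value `κ₀`. -/
theorem kappa_minimization (α d : ℝ) (hα1 : 1 < α) (hα2 : α ≤ 2)
    (hd0 : 0 < d) (hd1 : d < 1 - 1 / α)
    (γ₀ r₀ κ₀ : ℝ)
    (hγ₀ : γ₀ = if 1 < α * (1 - d) * (1 - 2 * d) then d / (1 - d)
      else (α * (1 - d) - 1) / (α * (1 - d) + 1))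
    (hr₀ : r₀ = if 1 < α * (1 - d) * (1 - 2 * d) then α * (1 - d)
      else (1 / (1 - d) + α) / 2)
    (hκ₀ : κ₀ = if 1 < α * (1 - d) * (1 - 2 * d) then 1 / (α * (1 - d))
      else d + (1 - d) * (3 - α * (1 - d)) / (α * (1 - d) + 1)) :
    -- (γ₀, r₀) belongs to the domain D
    (1 / (1 - d) ≤ r₀ ∧ r₀ ≤ α ∧ 0 ≤ γ₀ ∧
      γ₀ ≤ min (d / (1 - d)) (min (1 - 1 / (r₀ * (1 - d))) (α / r₀ - 1))) ∧
    -- the value at (γ₀, r₀) is κ₀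
    1 + 1 / r₀ - (1 - d) * (1 + γ₀) = κ₀ ∧
    -- κ₀ is the minimum, attained only at (γ₀, r₀)
    (∀ γ r : ℝ, 1 / (1 - d) ≤ r → r ≤ α → 0 ≤ γ →
      γ ≤ min (d / (1 - d)) (min (1 - 1 / (r * (1 - d))) (α / r - 1)) →
        κ₀ ≤ 1 + 1 / r - (1 - d) * (1 + γ) ∧
          (1 + 1 / r - (1 - d) * (1 + γ) = κ₀ → γ = γ₀ ∧ r = r₀)) := by
  have hα0 : (0:ℝ) < α := by linarith
  have hβ0 : (0:ℝ) < 1 - d := by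
    have h2 : 0 < 1/α := by positivity
    linarith
  have hβne : (1:ℝ) - d ≠ 0 := ne_of_gt hβ0
  have hA1 : 1 < α*(1-d) := by
    have h1α : 1/α < 1 - d := by linarith
    have := (div_lt_iff₀ hα0).mp h1α
    nlinarith
  have hA0 : (0:ℝ) < α*(1-d) := by linarith
  have hd2 : d < 1/2 := by
    have h12 : (1:ℝ)/2 ≤ 1/α := one_div_le_one_div_of_le hα0 hα2
    linarith
  by_cases hcase : 1 < α * (1 - d) * (1 - 2 * d)
  · -- Case 1
    rw [if_pos hcase] at hγ₀ hr₀ hκ₀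
    have hr₀pos : 0 < r₀ := hr₀ ▸ hA0
    refine ⟨⟨?_, ?_, ?_, ?_⟩, ?_, ?_⟩
    · rw [hr₀, div_le_iff₀ hβ0]
      nlinarith [hcase, mul_nonneg (mul_nonneg hα0.le hβ0.le) hd0.le]
    · rw [hr₀]; nlinarith [mul_pos hα0 hd0]
    · rw [hγ₀]; positivity
    · rw [hγ₀, hr₀]
      refine le_min le_rfl (le_min ?_ ?_)
      · have hkey : 1/(α*(1-d)*(1-d)) ≤ (1-2*d)/(1-d) := by
          rw [div_le_div_iff₀ (by positivity) hβ0]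
          nlinarith [mul_nonneg (by linarith : (0:ℝ) ≤ α*(1-d)*(1-2*d) - 1) hβ0.le]
        have hsum : d/(1-d) + (1-2*d)/(1-d) = 1 := by
          rw [← add_div, div_eq_one_iff_eq hβne]; ring
        linarith [hkey, hsum]
      · have he : α/(α*(1-d)) - 1 = d/(1-d) := by
          field_simp
          ring
        exact le_of_eq he.symm
    · rw [hγ₀, hr₀, hκ₀]
      have he : (1-d)*(1+d/(1-d)) = 1 := by field_simp; ring
      linarith
    · intro γ r hr1 hr2 hγnn hγm
      have hr0 : 0 < r := lt_of_lt_of_le (by positivity) hr1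
      have hga : γ ≤ d/(1-d) := le_trans hγm (min_le_left _ _)
      have hgc : γ ≤ α/r - 1 := le_trans hγm (le_trans (min_le_right _ _) (min_le_right _ _))
      rcases le_total r (α*(1-d)) with hle | hge
      · have h1 : 1/(α*(1-d)) ≤ 1/r := one_div_le_one_div_of_le hr0 hle
        have h2 : γ*(1-d) ≤ d := (le_div_iff₀ hβ0).mp hga
        constructor
        · rw [hκ₀]; linarith [h1, h2]
        · intro heq
          rw [hκ₀] at heq
          have e1 : 1/r = 1/(α*(1-d)) := by linarith [h1, h2]
          have e2 : γ*(1-d) = d := by linarith [h1, h2]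
          constructor
          · rw [hγ₀, eq_div_iff hβne]; linarith
          · rw [hr₀]
            have := (div_eq_div_iff hr0.ne' hA0.ne').mp e1
            linarith
      · have h1 : 1/r ≤ 1/(α*(1-d)) := one_div_le_one_div_of_le hA0 hge
        have h3 : γ + 1 ≤ α*(1/r) := by
          have h2 : (γ+1)*r ≤ α := (le_div_iff₀ hr0).mp (by linarith)
          have h4 := mul_le_mul_of_nonneg_right h2 (le_of_lt (one_div_pos.mpr hr0))
          rwa [mul_assoc, mul_one_div_cancel hr0.ne', mul_one] at h4
        have hprod : 0 ≤ (α*(1-d)-1)*(1/(α*(1-d)) - 1/r) :=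
          mul_nonneg (by linarith) (by linarith)
        have hint3 : (1-d)*(γ+1) ≤ (1-d)*(α*(1/r)) := mul_le_mul_of_nonneg_left h3 hβ0.le
        have hv : (α*(1-d))*(1/(α*(1-d))) = 1 := mul_one_div_cancel hA0.ne'
        constructor
        · rw [hκ₀]; linarith [hprod, hint3, hv]
        · intro heq
          rw [hκ₀] at heq
          have h5 : (α*(1-d)-1)*(1/(α*(1-d)) - 1/r) ≤ 0 := by linarith [hint3, hv]
          have h6 : 1/(α*(1-d)) - 1/r = 0 := by
            rcases mul_eq_zero.mp (le_antisymm h5 hprod) with h | h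
            · exfalso; linarith
            · exact h
          have e2 : (1-d)*(1+γ) = 1 := by linarith
          constructor
          · rw [hγ₀, eq_div_iff hβne]; linarith
          · rw [hr₀]
            have e1 : 1/r = 1/(α*(1-d)) := by linarith
            have := (div_eq_div_iff hr0.ne' hA0.ne').mp e1
            linarith
  · -- Case 2
    rw [if_neg hcase] at hγ₀ hr₀ hκ₀
    push_neg at hcase
    have hA1' : (0:ℝ) < α*(1-d)+1 := by linarith
    have hAne : α*(1-d)+1 ≠ 0 := ne_of_gt hA1'
    have h1A : 1/(1-d) < α := by rw [div_lt_iff₀ hβ0]; nlinarith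
    have hden : (0:ℝ) < 1/(1-d)+α := by positivity
    have hr₀pos : 0 < r₀ := by rw [hr₀]; positivity
    have hw : (1:ℝ)/r₀ = 2*(1-d)/(α*(1-d)+1) := by
      rw [hr₀]; rw [div_eq_div_iff (by positivity) hAne]; field_simp; ring
    have hu₀ : (1/r₀)*(α*(1-d)+1) = 2*(1-d) := by
      rw [hw]; field_simp
    have hκval : κ₀ = 1 + 2*(1/r₀) - 2*(1-d) := by
      rw [hκ₀, hw]; field_simp; ring
    have hκval2 : κ₀ = 1 + (1/r₀) - (α*(1-d))*(1/r₀) := by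
      rw [hκ₀, hw]; field_simp; ring
    refine ⟨⟨?_, ?_, ?_, ?_⟩, ?_, ?_⟩
    · rw [hr₀]; linarith
    · rw [hr₀]; linarith
    · rw [hγ₀]; exact div_nonneg (by linarith) (by linarith)
    · refine le_min ?_ (le_min ?_ ?_)
      · rw [hγ₀, div_le_div_iff₀ hA1' hβ0]; nlinarith [hcase]
      · have he : 1 - 1/(r₀*(1-d)) = (α*(1-d)-1)/(α*(1-d)+1) := by
          rw [hr₀]; field_simp; ring
        rw [hγ₀, he]
      · have he : α/r₀ - 1 = (α*(1-d)-1)/(α*(1-d)+1) := by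
          rw [hr₀]; field_simp; ring
        rw [hγ₀, he]
    · rw [hγ₀, hw, hκ₀]; field_simp; ring
    · intro γ r hr1 hr2 hγnn hγm
      have hr0 : 0 < r := lt_of_lt_of_le (by positivity) hr1
      have hga : γ ≤ d/(1-d) := le_trans hγm (min_le_left _ _)
      have hgb : γ ≤ 1 - 1/(r*(1-d)) :=
        le_trans hγm (le_trans (min_le_right _ _) (min_le_left _ _))
      have hgc : γ ≤ α/r - 1 := le_trans hγm (le_trans (min_le_right _ _) (min_le_right _ _))
      rcases le_total r r₀ with hle | hge
      · have h1 : 1/r₀ ≤ 1/r := one_div_le_one_div_of_le hr0 hle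
        have h2 : 1/r ≤ (1-d)*(1-γ) := by
          have h2' : 1/(r*(1-d)) ≤ 1 - γ := by linarith
          have h := mul_le_mul_of_nonneg_left h2' hβ0.le
          have he : (1-d)*(1/(r*(1-d))) = 1/r := by field_simp
          linarith [he ▸ h]
        constructor
        · linarith [hκval, h1, h2]
        · intro heq
          have e1 : 1/r = 1/r₀ := by linarith [hκval, h1, h2]
          have e2 : (1-d)*γ = (1-d) - 1/r₀ := by linarith [hκval, e1]
          constructor
          · have e3 : γ*(α*(1-d)+1)*(1-d) = (α*(1-d)-1)*(1-d) := by
              linear_combination (α*(1-d)+1)*e2 - hu₀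
            rw [hγ₀, eq_div_iff hAne]
            exact mul_right_cancel₀ hβne e3
          · have := (div_eq_div_iff hr0.ne' hr₀pos.ne').mp e1
            linarith
      · have h1 : 1/r ≤ 1/r₀ := one_div_le_one_div_of_le hr₀pos hge
        have h3 : γ + 1 ≤ α*(1/r) := by
          have h2 : (γ+1)*r ≤ α := (le_div_iff₀ hr0).mp (by linarith)
          have h4 := mul_le_mul_of_nonneg_right h2 (le_of_lt (one_div_pos.mpr hr0))
          rwa [mul_assoc, mul_one_div_cancel hr0.ne', mul_one] at h4
        have hprod : 0 ≤ (α*(1-d)-1)*(1/r₀ - 1/r) :=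
          mul_nonneg (by linarith) (by linarith)
        have hint3 : (1-d)*(γ+1) ≤ (1-d)*(α*(1/r)) := mul_le_mul_of_nonneg_left h3 hβ0.le
        constructor
        · linarith [hκval2, hprod, hint3]
        · intro heq
          have h5 : (α*(1-d)-1)*(1/r₀ - 1/r) ≤ 0 := by linarith [hκval2, hint3]
          have h6 : 1/r₀ - 1/r = 0 := by
            rcases mul_eq_zero.mp (le_antisymm h5 hprod) with h | h
            · exfalso; linarith
            · exact h
          have e2 : (1-d)*(1+γ) = (α*(1-d))*(1/r₀) := by linarith [hκval2, h6]
          constructor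
          · have e3 : γ*(α*(1-d)+1)*(1-d) = (α*(1-d)-1)*(1-d) := by
              linear_combination (α*(1-d)+1)*e2 + (α*(1-d))*hu₀
            rw [hγ₀, eq_div_iff hAne]
            exact mul_right_cancel₀ hβne e3
          · have e1 : 1/r = 1/r₀ := by linarith
            have := (div_eq_div_iff hr0.ne' hr₀pos.ne').mp e1
            linarith
end

section
/- Let α ∈ (1,2] and d ∈ (0, 1−1/α). Then γ₀ = min{d/(1−d), 1 − 1/(r₀(1−d)), α/r₀ − 1}, the value r₀ satisfies 1/(1−d) < r₀ < α, and κ₀ < d + 1/α. -/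
/-- Proposition C.5(ii) of the paper: the optimizers `(γ₀, r₀)` satisfy
`γ₀ = min(d/(1-d), 1 - 1/(r₀(1-d)), α/r₀ - 1)`, `1/(1-d) < r₀ < α`, and
`κ₀ < d + 1/α`. -/
theorem kappa_optimizer_properties (α d : ℝ) (hα1 : 1 < α) (hα2 : α ≤ 2)
    (hd0 : 0 < d) (hd1 : d < 1 - 1 / α)
    (γ₀ r₀ κ₀ : ℝ)
    (hγ₀ : γ₀ = if 1 < α * (1 - d) * (1 - 2 * d) then d / (1 - d)
      else (α * (1 - d) - 1) / (α * (1 - d) + 1))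
    (hr₀ : r₀ = if 1 < α * (1 - d) * (1 - 2 * d) then α * (1 - d)
      else (1 / (1 - d) + α) / 2)
    (hκ₀ : κ₀ = if 1 < α * (1 - d) * (1 - 2 * d) then 1 / (α * (1 - d))
      else d + (1 - d) * (3 - α * (1 - d)) / (α * (1 - d) + 1)) :
    γ₀ = min (d / (1 - d)) (min (1 - 1 / (r₀ * (1 - d))) (α / r₀ - 1)) ∧
    (1 / (1 - d) < r₀ ∧ r₀ < α) ∧
    κ₀ < d + 1 / α := by
  have hα0 : (0:ℝ) < α := by linarith
  have hia : 1 / α ≥ 1 / 2 := by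
    rw [ge_iff_le, div_le_div_iff₀ (by norm_num) hα0]; linarith
  have hd2 : d < 1 / 2 := by linarith
  have h1d : 0 < 1 - d := by linarith
  have h12d : 0 < 1 - 2 * d := by linarith
  have hβ : 1 < α * (1 - d) := by
    have h1 : 1 / α < 1 - d := by linarith
    have := (div_lt_iff₀ hα0).mp h1
    linarith [mul_comm α (1 - d)]
  have hβ0 : 0 < α * (1 - d) := by linarith
  have h1dne : (1 - d) ≠ 0 := ne_of_gt h1d
  have hβne : α * (1 - d) ≠ 0 := ne_of_gt hβ0
  have hβ1 : 0 < α * (1 - d) + 1 := by linarith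
  have hβ1ne : α * (1 - d) + 1 ≠ 0 := ne_of_gt hβ1
  subst hγ₀ hr₀ hκ₀
  split_ifs with h
  · -- case α(1-d)(1-2d) > 1
    refine ⟨?_, ⟨?_, ?_⟩, ?_⟩
    · have hY : α / (α * (1 - d)) - 1 = d / (1 - d) := by
        field_simp; ring
      have hX : d / (1 - d) ≤ 1 - 1 / (α * (1 - d) * (1 - d)) := by
        have hpos : (0:ℝ) < α * (1 - d) * (1 - d) := by positivity
        have key : 1 / (α * (1 - d) * (1 - d)) < (1 - 2 * d) / (1 - d) := by
          rw [div_lt_div_iff₀ hpos h1d]; nlinarith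
        have hid : d / (1 - d) = 1 - (1 - 2 * d) / (1 - d) := by
          field_simp; ring
        linarith
      rw [hY, min_eq_right hX, min_self]
    · rw [div_lt_iff₀ h1d]; nlinarith
    · nlinarith
    · have h1 : 1 / (α * (1 - d)) - 1 / α = d / (α * (1 - d)) := by
        field_simp; ring
      have h2 : d / (α * (1 - d)) < d := by
        rw [div_lt_iff₀ hβ0]; nlinarith
      linarith
  · -- case α(1-d)(1-2d) ≤ 1
    push_neg at h
    have hr : (1 / (1 - d) + α) / 2 = (1 + α * (1 - d)) / (2 * (1 - d)) := by
      field_simp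
    have h2pos : (0:ℝ) < 2 * (1 - d) := by linarith
    have h1βne : (1 + α * (1 - d)) ≠ 0 := by nlinarith
    refine ⟨?_, ⟨?_, ?_⟩, ?_⟩
    · rw [hr]
      have hprod : (1 + α * (1 - d)) / (2 * (1 - d)) * (1 - d) = (1 + α * (1 - d)) / 2 := by
        field_simp
      have hX : 1 - 1 / ((1 + α * (1 - d)) / (2 * (1 - d)) * (1 - d)) =
          (α * (1 - d) - 1) / (α * (1 - d) + 1) := by
        rw [hprod]; field_simp; ring
      have hY : α / ((1 + α * (1 - d)) / (2 * (1 - d))) - 1 =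
          (α * (1 - d) - 1) / (α * (1 - d) + 1) := by
        rw [div_div_eq_mul_div]; field_simp; ring
      rw [hX, hY, min_self, min_eq_right]
      rw [div_le_div_iff₀ hβ1 h1d]
      nlinarith
    · rw [hr, lt_div_iff₀ h2pos, div_mul_eq_mul_div, div_lt_iff₀ h1d]
      nlinarith
    · rw [hr, div_lt_iff₀ h2pos]
      nlinarith
    · have : (1 - d) * (3 - α * (1 - d)) / (α * (1 - d) + 1) < 1 / α := by
        rw [div_lt_div_iff₀ hβ1 hα0]
        nlinarith [sq_nonneg (α * (1 - d) - 1)]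
      linarith
end

section
/- Let β > 0 and let ω : ℝ → ℝ be continuously differentiable with ω(x) > 0 for all sufficiently large x, and suppose x^{1−β} ω'(x)/ω(x) → 0 as x → ∞. Set f(x) := ω(x)·exp(−x^β/β). Then ∫_u^∞ f(x) dx is finite for all sufficiently large u, and u^{1−β} f(u) / ∫_u^∞ f(x) dx → 1 as u → ∞. -/
open MeasureTheory Filter

lemma wte_hasDerivAt (β : ℝ) (hβ : 0 < β) (ω : ℝ → ℝ) (hω : ContDiff ℝ 1 ω)
    {x : ℝ} (hx : 0 < x) (hωx : ω x ≠ 0) :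
    HasDerivAt (fun y => y ^ (1 - β) * (ω y * Real.exp (-y ^ β / β)))
      (-((ω x * Real.exp (-x ^ β / β)) *
        (1 - (1 - β) * x ^ (-β) - x ^ (1 - β) * deriv ω x / ω x))) x := by
  have hω' : HasDerivAt ω (deriv ω x) x :=
    ((hω.differentiable one_ne_zero) x).hasDerivAt
  have h1 : HasDerivAt (fun y : ℝ => y ^ (1 - β)) ((1 - β) * x ^ (1 - β - 1)) x :=
    Real.hasDerivAt_rpow_const (Or.inl hx.ne')
  have h2 : HasDerivAt (fun y : ℝ => y ^ β) (β * x ^ (β - 1)) x :=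
    Real.hasDerivAt_rpow_const (Or.inl hx.ne')
  have h3 : HasDerivAt (fun y : ℝ => -y ^ β / β) (-(x ^ (β - 1))) x := by
    have := (h2.neg).div_const β
    convert this using 1
    · rfl
    · rfl
    · rfl
    field_simp
  have h4 : HasDerivAt (fun y : ℝ => Real.exp (-y ^ β / β))
      (Real.exp (-x ^ β / β) * -(x ^ (β - 1))) x := h3.exp
  have h6 := h1.mul (hω'.mul h4)
  convert h6 using 1
  · rfl
  · rfl
  · rfl
  have e1 : x ^ (1 - β - 1) = x ^ (-β) := by norm_num
  have e2 : x ^ (1 - β) * x ^ (β - 1) = 1 := by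
    rw [← Real.rpow_add hx]; norm_num
  rw [e1]
  simp only [Pi.mul_apply]
  field_simp
  linear_combination (ω x) * e2

/-- Equation (eqn:hopital) in the proof of Corollary 3.5 of the paper: for a Weibull-type
density `f(x) = ω(x) exp(-x^β/β)` with `ω` C¹, eventually positive, and
`x^{1-β} ω'(x)/ω(x) → 0` at `∞`, the tail integral `∫_u^∞ f` is finite for large `u` and
`u^{1-β} f(u) / ∫_u^∞ f(x) dx → 1` as `u → ∞`. -/
theorem weibull_tail_equivalence (β : ℝ) (hβ : 0 < β) (ω : ℝ → ℝ) (hω : ContDiff ℝ 1 ω)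
    (hpos : ∀ᶠ x in atTop, 0 < ω x)
    (h : Tendsto (fun x => x ^ (1 - β) * deriv ω x / ω x) atTop (nhds 0)) :
    (∀ᶠ u in atTop, IntegrableOn (fun x => ω x * Real.exp (-x ^ β / β)) (Set.Ioi u)) ∧
    Tendsto (fun u => u ^ (1 - β) * (ω u * Real.exp (-u ^ β / β)) /
        ∫ x in Set.Ioi u, ω x * Real.exp (-x ^ β / β)) atTop (nhds 1) := by
  obtain ⟨F, hFdef⟩ : ∃ F : ℝ → ℝ, F = fun x => ω x * Real.exp (-x ^ β / β) := ⟨_, rfl⟩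
  obtain ⟨G, hGdef⟩ : ∃ G : ℝ → ℝ, G = fun x => x ^ (1 - β) * F x := ⟨_, rfl⟩
  obtain ⟨H, hHdef⟩ : ∃ H : ℝ → ℝ,
      H = fun x => 1 - (1 - β) * x ^ (-β) - x ^ (1 - β) * deriv ω x / ω x := ⟨_, rfl⟩
  suffices Hmain : (∀ᶠ u in atTop, IntegrableOn F (Set.Ioi u)) ∧
      Tendsto (fun u => G u / ∫ x in Set.Ioi u, F x) atTop (nhds 1) by
    constructor
    · have h1 := Hmain.1
      rw [hFdef] at h1
      exact h1
    · have h2 := Hmain.2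
      rw [hGdef, hFdef] at h2
      simpa using h2
  -- H tends to 1
  have hH1 : Tendsto H atTop (nhds 1) := by
    have h0 : Tendsto (fun x : ℝ => x ^ (-β)) atTop (nhds 0) := tendsto_rpow_neg_atTop hβ
    have := ((tendsto_const_nhds (x := (1:ℝ))).sub (h0.const_mul (1 - β))).sub h
    simpa [hHdef] using this
  -- eventual properties
  have hev : ∀ᶠ x in atTop, 0 < x ∧ 0 < ω x ∧ 1 / 2 ≤ H x := by
    have h2 : ∀ᶠ x in atTop, 1 / 2 ≤ H x := hH1.eventually_const_le (by norm_num)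
    filter_upwards [eventually_gt_atTop 0, hpos, h2] with x h1 h2 h3
    exact ⟨h1, h2, h3⟩
  obtain ⟨a, ha⟩ := eventually_atTop.1 hev
  have hx : ∀ x, a ≤ x → 0 < x := fun x hxa => (ha x hxa).1
  have hFpos : ∀ x, a ≤ x → 0 < F x := by
    intro x hxa
    rw [hFdef]
    exact mul_pos (ha x hxa).2.1 (Real.exp_pos _)
  have hGpos : ∀ x, a ≤ x → 0 < G x := by
    intro x hxa
    rw [hGdef]
    exact mul_pos (Real.rpow_pos_of_pos (hx x hxa) _) (hFpos x hxa)
  have hderG : ∀ x, a ≤ x → HasDerivAt G (-(F x * H x)) x := by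
    intro x hxa
    have := wte_hasDerivAt β hβ ω hω (hx x hxa) (ha x hxa).2.1.ne'
    simpa [hGdef, hFdef, hHdef] using this
  -- G tends to 0
  have hG0 : Tendsto G atTop (nhds 0) := by
    set φ : ℝ → ℝ := fun x => Real.log (G x) + x ^ β / (2 * β) with hφdef
    have hderφ : ∀ x, a ≤ x → HasDerivAt φ (-(F x * H x) / G x + x ^ (β - 1) / 2) x := by
      intro x hxa
      have h1 : HasDerivAt (fun y => Real.log (G y)) (-(F x * H x) / G x) x :=
        (hderG x hxa).log (hGpos x hxa).ne'
      have h2 : HasDerivAt (fun y : ℝ => y ^ β / (2 * β)) (x ^ (β - 1) / 2) x := by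
        have := (Real.hasDerivAt_rpow_const (x := x) (p := β)
          (Or.inl (hx x hxa).ne')).div_const (2 * β)
        convert this using 1
        · rfl
        · rfl
        field_simp
      exact h1.add h2
    have hnonpos : ∀ x, a ≤ x → -(F x * H x) / G x + x ^ (β - 1) / 2 ≤ 0 := by
      intro x hxa
      have hF0 := hFpos x hxa
      have hx0 := hx x hxa
      have hinv : x ^ (β - 1) = (x ^ (1 - β))⁻¹ := by
        rw [show β - 1 = -(1 - β) by ring, Real.rpow_neg hx0.le]
      have hxp : (0:ℝ) < x ^ (1 - β) := Real.rpow_pos_of_pos hx0 _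
      have e : -(F x * H x) / G x = -(x ^ (β - 1) * H x) := by
        simp only [hGdef]
        rw [hinv]
        field_simp
      rw [e]
      have hHx := (ha x hxa).2.2
      have hxnn : (0:ℝ) ≤ x ^ (β - 1) := Real.rpow_nonneg hx0.le _
      nlinarith
    have hanti : AntitoneOn φ (Set.Ici a) := by
      apply antitoneOn_of_deriv_nonpos (convex_Ici a)
      · exact fun x hx' => (hderφ x hx').continuousAt.continuousWithinAt
      · intro x hx'
        rw [interior_Ici] at hx'
        exact (hderφ x hx'.le).differentiableAt.differentiableWithinAt
      · intro x hx'
        rw [interior_Ici] at hx'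
        rw [(hderφ x hx'.le).deriv]
        exact hnonpos x hx'.le
    have hbound : ∀ x, a ≤ x → G x ≤ Real.exp (φ a - x ^ β / (2 * β)) := by
      intro x hxa
      have h1 : φ x ≤ φ a := hanti Set.self_mem_Ici hxa hxa
      have h2 : Real.log (G x) ≤ φ a - x ^ β / (2 * β) := by
        simp only [hφdef] at h1
        linarith
      calc G x = Real.exp (Real.log (G x)) := (Real.exp_log (hGpos x hxa)).symm
        _ ≤ _ := Real.exp_le_exp.2 h2
    have hb0 : Tendsto (fun x => Real.exp (φ a - x ^ β / (2 * β))) atTop (nhds 0) := by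
      apply Real.tendsto_exp_atBot.comp
      have hdiv : Tendsto (fun x : ℝ => x ^ β / (2 * β)) atTop atTop :=
        (tendsto_rpow_atTop hβ).atTop_div_const (by positivity)
      have := tendsto_atBot_add_const_left atTop (φ a) (tendsto_neg_atTop_atBot.comp hdiv)
      simpa [Function.comp, sub_eq_add_neg] using this
    refine squeeze_zero' ?_ ?_ hb0
    · filter_upwards [eventually_ge_atTop a] with x hxa
      exact (hGpos x hxa).le
    · filter_upwards [eventually_ge_atTop a] with x hxa
      exact hbound x hxa
  -- F continuous
  have hFcont : Continuous F := by
    rw [hFdef]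
    apply hω.continuous.mul
    exact Real.continuous_exp.comp ((Real.continuous_rpow_const hβ.le).neg.div_const β)
  -- key integral facts
  have hkey : ∀ u, a ≤ u → IntegrableOn (fun x => F x * H x) (Set.Ioi u) ∧
      (∫ x in Set.Ioi u, F x * H x) = G u ∧ IntegrableOn F (Set.Ioi u) := by
    intro u hu
    have hder : ∀ x ∈ Set.Ici u, HasDerivAt (fun y => -G y) (F x * H x) x := by
      intro x hxI
      have := (hderG x (hu.trans hxI)).neg; simp only [neg_neg] at this; exact this
    have hnn : ∀ x ∈ Set.Ioi u, 0 ≤ F x * H x := by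
      intro x hxI
      have hax : a ≤ x := hu.trans hxI.le
      have h1 := hFpos x hax
      have h2 := (ha x hax).2.2
      exact mul_nonneg h1.le (by linarith)
    have hlim : Tendsto (fun y => -G y) atTop (nhds 0) := by simpa using hG0.neg
    have hint := integrableOn_Ioi_deriv_of_nonneg' hder hnn hlim
    have hval := integral_Ioi_of_hasDerivAt_of_nonneg' hder hnn hlim
    refine ⟨hint, by simpa using hval, ?_⟩
    refine Integrable.mono' (hint.const_mul 2)
      (hFcont.aestronglyMeasurable.restrict) ?_
    rw [ae_restrict_iff' measurableSet_Ioi]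
    apply ae_of_all
    intro x hxI
    have hax : a ≤ x := hu.trans (Set.mem_Ioi.1 hxI).le
    have h1 := hFpos x hax
    have h2 := (ha x hax).2.2
    rw [Real.norm_eq_abs, abs_of_pos h1]
    nlinarith [mul_nonneg h1.le (by linarith : (0:ℝ) ≤ 2 * H x - 1)]
  constructor
  · filter_upwards [eventually_ge_atTop a] with u hu
    exact (hkey u hu).2.2
  · rw [Metric.tendsto_atTop]
    intro ε hε
    set δ : ℝ := min (ε / 2) (1 / 2) with hδdef
    have hδpos : 0 < δ := lt_min (by linarith) (by norm_num)
    obtain ⟨b, hb⟩ := Metric.tendsto_atTop.1 hH1 δ hδpos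
    refine ⟨max a b, fun u hu => ?_⟩
    have hua : a ≤ u := (le_max_left _ _).trans hu
    have hub : b ≤ u := (le_max_right _ _).trans hu
    obtain ⟨hint, hval, hintF⟩ := hkey u hua
    have hHbnd : ∀ x, u ≤ x → |H x - 1| < δ := by
      intro x hx'
      have := hb x (hub.trans hx')
      rwa [Real.dist_eq] at this
    have hup : (∫ x in Set.Ioi u, F x * H x) ≤ (1 + δ) * ∫ x in Set.Ioi u, F x := by
      rw [← integral_const_mul]
      apply setIntegral_mono_on hint (hintF.const_mul _) measurableSet_Ioi
      intro x hxI
      have h1 := (hFpos x (hua.trans (Set.mem_Ioi.1 hxI).le)).le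
      have h2 := abs_lt.1 (hHbnd x (Set.mem_Ioi.1 hxI).le)
      nlinarith [h2.1, h2.2]
    have hlow : (1 - δ) * (∫ x in Set.Ioi u, F x) ≤ ∫ x in Set.Ioi u, F x * H x := by
      rw [← integral_const_mul]
      apply setIntegral_mono_on (hintF.const_mul _) hint measurableSet_Ioi
      intro x hxI
      have h1 := (hFpos x (hua.trans (Set.mem_Ioi.1 hxI).le)).le
      have h2 := abs_lt.1 (hHbnd x (Set.mem_Ioi.1 hxI).le)
      nlinarith [h2.1, h2.2]
    have hGu := hGpos u hua
    have hI : 0 < ∫ x in Set.Ioi u, F x := by nlinarith [hup, hval, hGu, hδpos]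
    have hδε : δ ≤ ε / 2 := min_le_left _ _
    rw [Real.dist_eq]
    have h1 : G u / (∫ x in Set.Ioi u, F x) ≤ 1 + δ := by
      rw [div_le_iff₀ hI]; nlinarith [hup, hval]
    have h2 : 1 - δ ≤ G u / (∫ x in Set.Ioi u, F x) := by
      rw [le_div_iff₀ hI]; nlinarith [hlow, hval]
    rw [abs_sub_lt_iff]
    constructor <;> linarith
end
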